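/- arXiv:2011.14605 — 6 statements merged into one kernel-verified Lean document; each statement's English description precedes it below -/
import Mathlib

section
/- For s > s₀ and r ∈ ℝ define σ(s;r) = ∫₀¹ (1/(2H_p(p;s)²) - H(p;s) - Ω(p) + Ω(1) + r) H_p(p;s) dp, where H_p(p;s) = (s² - 2Ω(p))^{-1/2}. Then ∂_s σ(s;r) = -s (r - R(s)) ∫₀¹ H_p(p;s)³ dp. -/
open Real MeasureTheory Set Filter Topology

theorem stmt6 (ω Ω : ℝ → ℝ) (hωcont : ContinuousOn ω (Icc 0 1))
    (hΩ : ∀ p, Ω p = ∫ t in (0:ℝ)..p, ω t)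
    (s₀ : ℝ) (hs₀ : s₀ = Real.sqrt (sSup ((fun p => 2 * Ω p) '' Icc (0:ℝ) 1)))
    (Hp H : ℝ → ℝ → ℝ)
    (hHp : ∀ p s, Hp p s = (s ^ 2 - 2 * Ω p) ^ (-(1/2) : ℝ))
    (hH : ∀ p s, H p s = ∫ τ in (0:ℝ)..p, Hp τ s)
    (d R : ℝ → ℝ) (hd : ∀ s, d s = H 1 s)
    (hR : ∀ s, R s = s ^ 2 / 2 - Ω 1 + d s)
    (σ : ℝ → ℝ → ℝ)
    (hσ : ∀ s r, σ s r = ∫ p in (0:ℝ)..1,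
        (1 / (2 * (Hp p s) ^ 2) - H p s - Ω p + Ω 1 + r) * Hp p s) :
    ∀ r s, s₀ < s →
      HasDerivAt (fun s' => σ s' r)
        (-(s * (r - R s)) * ∫ p in (0:ℝ)..1, (Hp p s) ^ 3) s := by
  intro r s hs
  have hΩ0 : Ω 0 = 0 := by simp [hΩ]
  have huIcc : uIcc (0:ℝ) 1 = Icc 0 1 := uIcc_of_le zero_le_one
  have hIoc : uIoc (0:ℝ) 1 = Ioc 0 1 := uIoc_of_le zero_le_one
  have hIocsub : uIoc (0:ℝ) 1 ⊆ Icc (0:ℝ) 1 := by rw [hIoc]; exact Ioc_subset_Icc_self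
  have hωint : IntervalIntegrable ω volume 0 1 := by
    apply ContinuousOn.intervalIntegrable; rwa [huIcc]
  have hΩcont : ContinuousOn Ω (Icc 0 1) := by
    have h2 : IntegrableOn ω (uIcc (0:ℝ) 1) volume := by
      rw [huIcc]; exact hωcont.integrableOn_Icc
    have := intervalIntegral.continuousOn_primitive_interval (a := (0:ℝ)) (b := 1)
      (μ := volume) (f := ω) h2
    rw [huIcc] at this
    exact this.congr (fun p hp => hΩ p)
  -- facts about s₀
  have hbdd : BddAbove ((fun p => 2 * Ω p) '' Icc (0:ℝ) 1) :=
    (isCompact_Icc.image_of_continuousOn (continuousOn_const.mul hΩcont)).bddAbove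
  have h0mem : (0:ℝ) ∈ (fun p => 2 * Ω p) '' Icc (0:ℝ) 1 :=
    ⟨0, left_mem_Icc.2 zero_le_one, by simp [hΩ0]⟩
  have hSup0 : 0 ≤ sSup ((fun p => 2 * Ω p) '' Icc (0:ℝ) 1) := le_csSup hbdd h0mem
  have hs₀sq : s₀ ^ 2 = sSup ((fun p => 2 * Ω p) '' Icc (0:ℝ) 1) := by
    rw [hs₀, sq_sqrt hSup0]
  have hs₀0 : 0 ≤ s₀ := hs₀ ▸ Real.sqrt_nonneg _
  have hub : ∀ p ∈ Icc (0:ℝ) 1, 2 * Ω p ≤ s₀ ^ 2 := fun p hp =>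
    hs₀sq ▸ le_csSup hbdd ⟨p, hp, rfl⟩
  set s₁ : ℝ := (s₀ + s) / 2 with hs₁def
  set ε : ℝ := (s - s₀) / 2 with hεdef
  set δ : ℝ := s₁ ^ 2 - s₀ ^ 2 with hδdef
  have hs₁gt : s₀ < s₁ := by rw [hs₁def]; linarith
  have hs₁lt : s₁ < s := by rw [hs₁def]; linarith
  have hss₁ : s₁ ≤ s := hs₁lt.le
  have hε : 0 < ε := by rw [hεdef]; linarith
  have hδ : 0 < δ := by
    rw [hδdef]; nlinarith [hs₁gt, hs₀0]
  have hpos : ∀ x, s₁ ≤ x → ∀ p ∈ Icc (0:ℝ) 1, δ ≤ x ^ 2 - 2 * Ω p := by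
    intro x hx p hp
    have h1 := hub p hp
    have h2 : 0 ≤ (x - s₁) * (x + s₁) :=
      mul_nonneg (by linarith) (by linarith [hs₀0, hs₁gt])
    rw [hδdef]; nlinarith
  have hδs : 0 < Real.sqrt δ := Real.sqrt_pos.2 hδ
  have hqpos : ∀ x, s₁ ≤ x → ∀ p ∈ Icc (0:ℝ) 1, 0 < x ^ 2 - 2 * Ω p :=
    fun x hx p hp => lt_of_lt_of_le hδ (hpos x hx p hp)
  have hWpos : ∀ x, s₁ ≤ x → ∀ p ∈ Icc (0:ℝ) 1, 0 < Real.sqrt (x ^ 2 - 2 * Ω p) :=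
    fun x hx p hp => Real.sqrt_pos.2 (hqpos x hx p hp)
  -- continuity
  have hqcont : ∀ x : ℝ, ContinuousOn (fun p => x ^ 2 - 2 * Ω p) (Icc 0 1) :=
    fun x => continuousOn_const.sub (continuousOn_const.mul hΩcont)
  have hWcont : ∀ x : ℝ, ContinuousOn (fun p => Real.sqrt (x ^ 2 - 2 * Ω p)) (Icc 0 1) :=
    fun x => (hqcont x).sqrt
  have hWinvcont : ∀ x, s₁ ≤ x →
      ContinuousOn (fun p => (Real.sqrt (x ^ 2 - 2 * Ω p))⁻¹) (Icc 0 1) :=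
    fun x hx => (hWcont x).inv₀ (fun p hp => (hWpos x hx p hp).ne')
  have hHpeq : ∀ x, s₁ ≤ x → ∀ p ∈ Icc (0:ℝ) 1,
      Hp p x = (Real.sqrt (x ^ 2 - 2 * Ω p))⁻¹ := by
    intro x hx p hp
    have h1 := hqpos x hx p hp
    rw [hHp, Real.rpow_neg h1.le, Real.sqrt_eq_rpow]
  have hHpcont : ∀ x, s₁ ≤ x → ContinuousOn (fun p => Hp p x) (Icc 0 1) :=
    fun x hx => (hWinvcont x hx).congr (fun p hp => hHpeq x hx p hp)
  have hHpint : ∀ x, s₁ ≤ x → IntervalIntegrable (fun p => Hp p x) volume 0 1 := by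
    intro x hx; apply ContinuousOn.intervalIntegrable; rw [huIcc]; exact hHpcont x hx
  have hHcont : ∀ x, s₁ ≤ x → ContinuousOn (fun p => H p x) (Icc 0 1) := by
    intro x hx
    have h2 : IntegrableOn (fun τ => Hp τ x) (uIcc (0:ℝ) 1) volume := by
      rw [huIcc]; exact (hHpcont x hx).integrableOn_Icc
    have := intervalIntegral.continuousOn_primitive_interval (a := (0:ℝ)) (b := 1)
      (μ := volume) (f := fun τ => Hp τ x) h2
    rw [huIcc] at this
    exact this.congr (fun p hp => hH p x)
  have hHderiv : ∀ x, s₁ ≤ x → ∀ p ∈ Ioo (0:ℝ) 1,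
      HasDerivAt (fun u => H u x) (Hp p x) p := by
    intro x hx p hp
    have hmem : Icc (0:ℝ) 1 ∈ 𝓝 p := Icc_mem_nhds hp.1 hp.2
    have hca : ContinuousAt (fun τ => Hp τ x) p := (hHpcont x hx).continuousAt hmem
    have hmeas : StronglyMeasurableAtFilter (fun τ => Hp τ x) (𝓝 p) volume :=
      ⟨Icc 0 1, hmem, (hHpcont x hx).aestronglyMeasurable measurableSet_Icc⟩
    have hintp : IntervalIntegrable (fun τ => Hp τ x) volume 0 p := by
      apply (hHpint x hx).mono_set
      rw [huIcc, uIcc_of_le hp.1.le]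
      exact Icc_subset_Icc le_rfl hp.2.le
    have := intervalIntegral.integral_hasDerivAt_right hintp hmeas hca
    exact this.congr_of_eventuallyEq (eventually_of_mem hmem fun u hu => hH u x)
  have hH1 : ∀ x, s₁ ≤ x → H 1 x = ∫ p in (0:ℝ)..1, (Real.sqrt (x ^ 2 - 2 * Ω p))⁻¹ := by
    intro x hx
    rw [hH]
    exact intervalIntegral.integral_congr (fun p hp => hHpeq x hx p (huIcc ▸ hp))
  have hHHp : ∀ x, s₁ ≤ x → (∫ p in (0:ℝ)..1, H p x * Hp p x) = (H 1 x) ^ 2 / 2 := by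
    intro x hx
    have hint : IntervalIntegrable (fun p => H p x * Hp p x) volume 0 1 := by
      apply ContinuousOn.intervalIntegrable; rw [huIcc]
      exact (hHcont x hx).mul (hHpcont x hx)
    have hcont2 : ContinuousOn (fun p => (H p x) ^ 2 / 2) (Icc 0 1) :=
      ((hHcont x hx).pow 2).div_const 2
    have hder : ∀ p ∈ Ioo (0:ℝ) 1,
        HasDerivWithinAt (fun u => (H u x) ^ 2 / 2) (H p x * Hp p x) (Ioi p) p := by
      intro p hp
      have h1 := ((hHderiv x hx p hp).pow 2).div_const 2
      have h2 : HasDerivAt (fun u => (H u x) ^ 2 / 2) (H p x * Hp p x) p := by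
        refine h1.congr_deriv ?_; ring
      exact h2.hasDerivWithinAt
    have heq := intervalIntegral.integral_eq_sub_of_hasDeriv_right_of_le zero_le_one
      hcont2 hder hint
    have hH0 : H 0 x = 0 := by simp [hH]
    rw [heq, hH0]; ring
  -- closed form for σ on [s₁, ∞)
  have hσeq : ∀ x, s₁ ≤ x → σ x r =
      (∫ p in (0:ℝ)..1, Real.sqrt (x ^ 2 - 2 * Ω p))
      + (r + Ω 1 - x ^ 2 / 2) * (∫ p in (0:ℝ)..1, (Real.sqrt (x ^ 2 - 2 * Ω p))⁻¹)
      - (∫ p in (0:ℝ)..1, (Real.sqrt (x ^ 2 - 2 * Ω p))⁻¹) ^ 2 / 2 := by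
    intro x hx
    have hintW : IntervalIntegrable (fun p => Real.sqrt (x ^ 2 - 2 * Ω p)) volume 0 1 := by
      apply ContinuousOn.intervalIntegrable; rw [huIcc]; exact hWcont x
    have hintcW : IntervalIntegrable
        (fun p => (r + Ω 1 - x ^ 2 / 2) * (Real.sqrt (x ^ 2 - 2 * Ω p))⁻¹) volume 0 1 := by
      apply ContinuousOn.intervalIntegrable; rw [huIcc]
      exact continuousOn_const.mul (hWinvcont x hx)
    have hint1 : IntervalIntegrable (fun p => Real.sqrt (x ^ 2 - 2 * Ω p)
        + (r + Ω 1 - x ^ 2 / 2) * (Real.sqrt (x ^ 2 - 2 * Ω p))⁻¹) volume 0 1 :=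
      hintW.add hintcW
    have hint2 : IntervalIntegrable (fun p => H p x * Hp p x) volume 0 1 := by
      apply ContinuousOn.intervalIntegrable; rw [huIcc]
      exact (hHcont x hx).mul (hHpcont x hx)
    rw [hσ]
    have hcongr : (∫ p in (0:ℝ)..1, (1 / (2 * (Hp p x) ^ 2) - H p x - Ω p + Ω 1 + r) * Hp p x)
        = ∫ p in (0:ℝ)..1, ((Real.sqrt (x ^ 2 - 2 * Ω p)
            + (r + Ω 1 - x ^ 2 / 2) * (Real.sqrt (x ^ 2 - 2 * Ω p))⁻¹) - H p x * Hp p x) := by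
      apply intervalIntegral.integral_congr
      intro p hp
      rw [huIcc] at hp
      have h1 := hqpos x hx p hp
      have h2 := hWpos x hx p hp
      have h3 : Real.sqrt (x ^ 2 - 2 * Ω p) * Real.sqrt (x ^ 2 - 2 * Ω p)
          = x ^ 2 - 2 * Ω p := Real.mul_self_sqrt h1.le
      have hinv : Real.sqrt (x ^ 2 - 2 * Ω p) * (Real.sqrt (x ^ 2 - 2 * Ω p))⁻¹ = 1 :=
        mul_inv_cancel₀ h2.ne'
      have h4 : ((Real.sqrt (x ^ 2 - 2 * Ω p))⁻¹) ^ 2 = (x ^ 2 - 2 * Ω p)⁻¹ := by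
        rw [inv_pow, Real.sq_sqrt h1.le]
      have h5 : (1:ℝ) / (2 * (x ^ 2 - 2 * Ω p)⁻¹) = (x ^ 2 - 2 * Ω p) / 2 := by
        rw [one_div, mul_inv, inv_inv]; ring
      simp only [hHpeq x hx p hp]
      rw [h4, h5]
      linear_combination (-(Real.sqrt (x ^ 2 - 2 * Ω p))⁻¹) * h3
        + Real.sqrt (x ^ 2 - 2 * Ω p) * hinv
    rw [hcongr, intervalIntegral.integral_sub hint1 hint2, hHHp x hx,
      intervalIntegral.integral_add hintW hintcW, intervalIntegral.integral_const_mul,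
      hH1 x hx]
  -- ball facts
  have hballs₁ : ∀ x ∈ Metric.ball s ε, s₁ ≤ x := by
    intro x hx
    rw [Metric.mem_ball, Real.dist_eq] at hx
    have h1 := (abs_lt.1 hx).1
    have h2 : s - ε = s₁ := by rw [hεdef, hs₁def]; ring
    linarith
  have habs : ∀ x ∈ Metric.ball s ε, |x| ≤ |s| + ε := by
    intro x hx
    rw [Metric.mem_ball, Real.dist_eq] at hx
    calc |x| = |s + (x - s)| := by ring_nf
    _ ≤ |s| + |x - s| := abs_add_le _ _
    _ ≤ |s| + ε := by linarith
  have hinvb : ∀ x, s₁ ≤ x → ∀ p ∈ Icc (0:ℝ) 1,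
      (Real.sqrt (x ^ 2 - 2 * Ω p))⁻¹ ≤ (Real.sqrt δ)⁻¹ := by
    intro x hx p hp
    exact inv_anti₀ hδs (Real.sqrt_le_sqrt (hpos x hx p hp))
  -- pointwise derivatives in x
  have hWderiv : ∀ p ∈ Icc (0:ℝ) 1, ∀ x, s₁ ≤ x →
      HasDerivAt (fun y => Real.sqrt (y ^ 2 - 2 * Ω p))
        (x * (Real.sqrt (x ^ 2 - 2 * Ω p))⁻¹) x := by
    intro p hp x hx
    have hq' : HasDerivAt (fun y : ℝ => y ^ 2 - 2 * Ω p) (2 * x) x := by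
      simpa using (hasDerivAt_pow 2 x).sub_const (2 * Ω p)
    have h1 := (hqpos x hx p hp)
    have h2 := hWpos x hx p hp
    have := hq'.sqrt h1.ne'
    convert this using 1
    field_simp
  have hWinvderiv : ∀ p ∈ Icc (0:ℝ) 1, ∀ x, s₁ ≤ x →
      HasDerivAt (fun y => (Real.sqrt (y ^ 2 - 2 * Ω p))⁻¹)
        ((-x) * ((Real.sqrt (x ^ 2 - 2 * Ω p))⁻¹) ^ 3) x := by
    intro p hp x hx
    have h2 := hWpos x hx p hp
    have := (hWderiv p hp x hx).inv h2.ne'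
    refine this.congr_deriv ?_
    rw [div_eq_mul_inv, ← inv_pow]
    ring
  -- derivative of I₂ (the d-type integral)
  have hmeasWinv : ∀ᶠ x in 𝓝 s, AEStronglyMeasurable
      (fun p => (Real.sqrt (x ^ 2 - 2 * Ω p))⁻¹) (volume.restrict (uIoc (0:ℝ) 1)) := by
    refine eventually_of_mem (Metric.ball_mem_nhds s hε) (fun x hx => ?_)
    apply ContinuousOn.aestronglyMeasurable ((hWinvcont x (hballs₁ x hx)).mono hIocsub)
    rw [hIoc]; exact measurableSet_Ioc
  have hintWinv : IntervalIntegrable (fun p => (Real.sqrt (s ^ 2 - 2 * Ω p))⁻¹) volume 0 1 := by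
    apply ContinuousOn.intervalIntegrable; rw [huIcc]; exact hWinvcont s hss₁
  have hmeasF2' : AEStronglyMeasurable
      (fun p => (-s) * ((Real.sqrt (s ^ 2 - 2 * Ω p))⁻¹) ^ 3) (volume.restrict (uIoc (0:ℝ) 1)) := by
    apply ContinuousOn.aestronglyMeasurable
      ((continuousOn_const.mul ((hWinvcont s hss₁).pow 3)).mono hIocsub)
    rw [hIoc]; exact measurableSet_Ioc
  have hbound2 : ∀ᵐ t ∂(volume : Measure ℝ), t ∈ uIoc (0:ℝ) 1 → ∀ x ∈ Metric.ball s ε,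
      ‖(-x) * ((Real.sqrt (x ^ 2 - 2 * Ω t))⁻¹) ^ 3‖ ≤ (|s| + ε) * ((Real.sqrt δ)⁻¹) ^ 3 := by
    refine Filter.Eventually.of_forall (fun t ht x hx => ?_)
    have htI : t ∈ Icc (0:ℝ) 1 := hIocsub ht
    have hx₁ := hballs₁ x hx
    have h2 := hWpos x hx₁ t htI
    rw [Real.norm_eq_abs, abs_mul, abs_neg, abs_of_nonneg (by positivity :
      (0:ℝ) ≤ ((Real.sqrt (x ^ 2 - 2 * Ω t))⁻¹) ^ 3)]
    exact mul_le_mul (habs x hx) (pow_le_pow_left₀ (by positivity) (hinvb x hx₁ t htI) 3)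
      (by positivity) (by positivity)
  have hdiff2 : ∀ᵐ t ∂(volume : Measure ℝ), t ∈ uIoc (0:ℝ) 1 → ∀ x ∈ Metric.ball s ε,
      HasDerivAt (fun x => (Real.sqrt (x ^ 2 - 2 * Ω t))⁻¹)
        ((-x) * ((Real.sqrt (x ^ 2 - 2 * Ω t))⁻¹) ^ 3) x := by
    refine Filter.Eventually.of_forall (fun t ht x hx => ?_)
    exact hWinvderiv t (hIocsub ht) x (hballs₁ x hx)
  have hI₂ := (intervalIntegral.hasDerivAt_integral_of_dominated_loc_of_deriv_le
    (F := fun x p => (Real.sqrt (x ^ 2 - 2 * Ω p))⁻¹)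
    (F' := fun x p => (-x) * ((Real.sqrt (x ^ 2 - 2 * Ω p))⁻¹) ^ 3)
    (bound := fun _ => (|s| + ε) * ((Real.sqrt δ)⁻¹) ^ 3)
    (Metric.ball_mem_nhds s hε) hmeasWinv hintWinv hmeasF2' hbound2 (intervalIntegrable_const) hdiff2).2
  rw [intervalIntegral.integral_const_mul] at hI₂
  -- derivative of I₁ (the sqrt integral)
  have hmeasW : ∀ᶠ x in 𝓝 s, AEStronglyMeasurable
      (fun p => Real.sqrt (x ^ 2 - 2 * Ω p)) (volume.restrict (uIoc (0:ℝ) 1)) := by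
    refine Filter.Eventually.of_forall (fun x => ?_)
    apply ContinuousOn.aestronglyMeasurable ((hWcont x).mono hIocsub)
    rw [hIoc]; exact measurableSet_Ioc
  have hintW : IntervalIntegrable (fun p => Real.sqrt (s ^ 2 - 2 * Ω p)) volume 0 1 := by
    apply ContinuousOn.intervalIntegrable; rw [huIcc]; exact hWcont s
  have hmeasF1' : AEStronglyMeasurable
      (fun p => s * (Real.sqrt (s ^ 2 - 2 * Ω p))⁻¹) (volume.restrict (uIoc (0:ℝ) 1)) := by
    apply ContinuousOn.aestronglyMeasurable
      ((continuousOn_const.mul (hWinvcont s hss₁)).mono hIocsub)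
    rw [hIoc]; exact measurableSet_Ioc
  have hbound1 : ∀ᵐ t ∂(volume : Measure ℝ), t ∈ uIoc (0:ℝ) 1 → ∀ x ∈ Metric.ball s ε,
      ‖x * (Real.sqrt (x ^ 2 - 2 * Ω t))⁻¹‖ ≤ (|s| + ε) * (Real.sqrt δ)⁻¹ := by
    refine Filter.Eventually.of_forall (fun t ht x hx => ?_)
    have htI : t ∈ Icc (0:ℝ) 1 := hIocsub ht
    have hx₁ := hballs₁ x hx
    have h2 := hWpos x hx₁ t htI
    rw [Real.norm_eq_abs, abs_mul, abs_of_nonneg (by positivity :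
      (0:ℝ) ≤ (Real.sqrt (x ^ 2 - 2 * Ω t))⁻¹)]
    exact mul_le_mul (habs x hx) (hinvb x hx₁ t htI) (by positivity) (by positivity)
  have hdiff1 : ∀ᵐ t ∂(volume : Measure ℝ), t ∈ uIoc (0:ℝ) 1 → ∀ x ∈ Metric.ball s ε,
      HasDerivAt (fun x => Real.sqrt (x ^ 2 - 2 * Ω t))
        (x * (Real.sqrt (x ^ 2 - 2 * Ω t))⁻¹) x := by
    refine Filter.Eventually.of_forall (fun t ht x hx => ?_)
    exact hWderiv t (hIocsub ht) x (hballs₁ x hx)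
  have hI₁ := (intervalIntegral.hasDerivAt_integral_of_dominated_loc_of_deriv_le
    (F := fun x p => Real.sqrt (x ^ 2 - 2 * Ω p))
    (F' := fun x p => x * (Real.sqrt (x ^ 2 - 2 * Ω p))⁻¹)
    (bound := fun _ => (|s| + ε) * (Real.sqrt δ)⁻¹)
    (Metric.ball_mem_nhds s hε) hmeasW hintW hmeasF1' hbound1 (intervalIntegrable_const) hdiff1).2
  rw [intervalIntegral.integral_const_mul] at hI₁
  -- assemble
  set J : ℝ := ∫ p in (0:ℝ)..1, ((Real.sqrt (s ^ 2 - 2 * Ω p))⁻¹) ^ 3 with hJdef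
  set Ds : ℝ := ∫ p in (0:ℝ)..1, (Real.sqrt (s ^ 2 - 2 * Ω p))⁻¹ with hDsdef
  have hc : HasDerivAt (fun x : ℝ => r + Ω 1 - x ^ 2 / 2) (-s) s := by
    have h1 : HasDerivAt (fun x : ℝ => x ^ 2 / 2) s s := by
      simpa using (hasDerivAt_pow 2 s).div_const 2
    exact ((hasDerivAt_const s (r + Ω 1)).sub h1).congr_deriv (by ring)
  have hΦ : HasDerivAt (fun x =>
      (∫ p in (0:ℝ)..1, Real.sqrt (x ^ 2 - 2 * Ω p))
      + (r + Ω 1 - x ^ 2 / 2) * (∫ p in (0:ℝ)..1, (Real.sqrt (x ^ 2 - 2 * Ω p))⁻¹)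
      - (∫ p in (0:ℝ)..1, (Real.sqrt (x ^ 2 - 2 * Ω p))⁻¹) ^ 2 / 2)
      (s * Ds + ((-s) * Ds + (r + Ω 1 - s ^ 2 / 2) * ((-s) * J))
        - (2 * Ds ^ 1 * ((-s) * J)) / 2) s :=
    (hI₁.add (hc.mul hI₂)).sub ((hI₂.pow 2).div_const 2)
  have hfinal : HasDerivAt (fun x => σ x r)
      (s * Ds + ((-s) * Ds + (r + Ω 1 - s ^ 2 / 2) * ((-s) * J))
        - (2 * Ds ^ 1 * ((-s) * J)) / 2) s :=
    hΦ.congr_of_eventuallyEq (eventually_of_mem (Metric.ball_mem_nhds s hε)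
      (fun x hx => hσeq x (hballs₁ x hx)))
  have hJint : (∫ p in (0:ℝ)..1, (Hp p s) ^ 3) = J := by
    rw [hJdef]
    exact intervalIntegral.integral_congr
      (fun p hp => by rw [hHpeq s hss₁ p (huIcc ▸ hp)])
  have htgt : -(s * (r - R s)) * (∫ p in (0:ℝ)..1, (Hp p s) ^ 3)
      = s * Ds + ((-s) * Ds + (r + Ω 1 - s ^ 2 / 2) * ((-s) * J))
        - (2 * Ds ^ 1 * ((-s) * J)) / 2 := by
    rw [hJint, hR, hd, hH1 s hss₁, ← hDsdef]
    ring
  rw [htgt]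
  exact hfinal
end

section
/- Fix r with R_c < r < R_0, and let s₋(r) < s_c < s₊(r) be the two solutions of R(s) = r. Then the function s ↦ σ(s;r) is strictly increasing on (s₀, s₋(r)), strictly decreasing on (s₋(r), s₊(r)), and strictly increasing on (s₊(r), ∞) with σ(s;r) → +∞ as s → ∞. -/
open Real MeasureTheory Set Filter Topology intervalIntegral

lemma aux_cont (Ω : ℝ → ℝ) (hΩc : ContinuousOn Ω (Icc 0 1))
    (c x : ℝ) (hx : ∀ p ∈ Icc (0:ℝ) 1, 0 < x ^ 2 - 2 * Ω p) :
    ContinuousOn (fun p => (x ^ 2 - 2 * Ω p) ^ c) (Icc 0 1) := by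
  exact ContinuousOn.rpow_const (continuousOn_const.sub (continuousOn_const.mul hΩc))
    (fun p hp => Or.inl (ne_of_gt (hx p hp)))

lemma aux_deriv (Ω : ℝ → ℝ) (hΩc : ContinuousOn Ω (Icc 0 1)) {s₀ : ℝ} (hs₀ : 0 ≤ s₀)
    (hub : ∀ p ∈ Icc (0:ℝ) 1, 2 * Ω p ≤ s₀ ^ 2) (c : ℝ) {s : ℝ} (hs : s₀ < s) :
    HasDerivAt (fun x => ∫ p in (0:ℝ)..1, (x ^ 2 - 2 * Ω p) ^ c)
      (∫ p in (0:ℝ)..1, 2 * s * c * (s ^ 2 - 2 * Ω p) ^ (c - 1)) s := by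
  have hsp : 0 < s := lt_of_le_of_lt hs₀ hs
  set ε := (s - s₀) / 2 with hε
  have hε_pos : 0 < ε := by simp [hε]; linarith
  have hse : s₀ < s - ε := by rw [hε]; linarith
  have hsε_pos : 0 < s - ε := lt_of_le_of_lt hs₀ hse
  obtain ⟨C, hC⟩ := isCompact_Icc.exists_bound_of_continuousOn hΩc
  have hC0 : 0 ≤ C := le_trans (norm_nonneg _) (hC 0 ⟨le_refl _, zero_le_one⟩)
  have hCabs : ∀ p ∈ Icc (0:ℝ) 1, |Ω p| ≤ C := by
    intro p hp; simpa [Real.norm_eq_abs] using hC p hp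
  have hxball : ∀ x ∈ Metric.ball s ε, s - ε < x ∧ x < s + ε := by
    intro x hx
    rw [Metric.mem_ball, Real.dist_eq, abs_lt] at hx
    constructor <;> linarith [hx.1, hx.2]
  have key : ∀ x ∈ Metric.ball s ε, ∀ p ∈ Icc (0:ℝ) 1,
      (s - ε) ^ 2 - s₀ ^ 2 ≤ x ^ 2 - 2 * Ω p := by
    intro x hx p hp
    obtain ⟨h1, _⟩ := hxball x hx
    have : (s - ε) ^ 2 ≤ x ^ 2 := pow_le_pow_left₀ hsε_pos.le h1.le 2
    have := hub p hp
    linarith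
  have hδ : 0 < (s - ε) ^ 2 - s₀ ^ 2 := by nlinarith
  have keypos : ∀ x ∈ Metric.ball s ε, ∀ p ∈ Icc (0:ℝ) 1, 0 < x ^ 2 - 2 * Ω p :=
    fun x hx p hp => lt_of_lt_of_le hδ (key x hx p hp)
  have keyub : ∀ x ∈ Metric.ball s ε, ∀ p ∈ Icc (0:ℝ) 1,
      x ^ 2 - 2 * Ω p ≤ (s + ε) ^ 2 + 2 * C := by
    intro x hx p hp
    obtain ⟨h1, h2⟩ := hxball x hx
    have hx0 : 0 ≤ x := le_of_lt (lt_of_lt_of_le hsε_pos h1.le)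
    have : x ^ 2 ≤ (s + ε) ^ 2 := pow_le_pow_left₀ hx0 h2.le 2
    have := abs_le.mp (hCabs p hp)
    linarith [this.1]
  have hIsub : uIoc (0:ℝ) 1 ⊆ Icc (0:ℝ) 1 := by
    rw [uIoc_of_le zero_le_one]; exact Ioc_subset_Icc_self
  have huIcc : uIcc (0:ℝ) 1 = Icc (0:ℝ) 1 := uIcc_of_le zero_le_one
  have hsball : s ∈ Metric.ball s ε := Metric.mem_ball_self hε_pos
  set B := |c| * max (((s - ε) ^ 2 - s₀ ^ 2) ^ (c - 1)) ((( s + ε) ^ 2 + 2 * C) ^ (c - 1))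
    * (2 * (s + ε)) with hB
  have key2 : ∀ x ∈ Metric.ball s ε, ∀ p ∈ Icc (0:ℝ) 1,
      (x ^ 2 - 2 * Ω p) ^ (c - 1)
        ≤ max (((s - ε) ^ 2 - s₀ ^ 2) ^ (c - 1)) (((s + ε) ^ 2 + 2 * C) ^ (c - 1)) := by
    intro x hx p hp
    rcases le_total (c - 1) 0 with h | h
    · exact le_max_of_le_left (Real.rpow_le_rpow_of_nonpos hδ (key x hx p hp) h)
    · exact le_max_of_le_right
        (Real.rpow_le_rpow (keypos x hx p hp).le (keyub x hx p hp) h)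
  have main := intervalIntegral.hasDerivAt_integral_of_dominated_loc_of_deriv_le
    (F := fun x p => (x ^ 2 - 2 * Ω p) ^ c)
    (F' := fun x p => 2 * x * c * (x ^ 2 - 2 * Ω p) ^ (c - 1))
    (bound := fun _ => B) (μ := volume) (a := 0) (b := 1) (x₀ := s) (Metric.ball_mem_nhds s hε_pos)
    ?_ ?_ ?_ ?_ ?_ ?_
  · exact main.2
  · filter_upwards [Metric.ball_mem_nhds s hε_pos] with x hx
    exact ((aux_cont Ω hΩc c x (keypos x hx)).mono hIsub).aestronglyMeasurable
      measurableSet_uIoc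
  · apply ContinuousOn.intervalIntegrable
    rw [huIcc]; exact aux_cont Ω hΩc c s (keypos s hsball)
  · apply ContinuousOn.aestronglyMeasurable _ measurableSet_uIoc
    apply ContinuousOn.mono _ hIsub
    exact continuousOn_const.mul (aux_cont Ω hΩc (c-1) s (keypos s hsball))
  · apply ae_of_all
    intro p hp x hx
    have hp' : p ∈ Icc (0:ℝ) 1 := hIsub hp
    have hX : 0 < x ^ 2 - 2 * Ω p := keypos x hx p hp'
    have hx2 : 0 < x := lt_of_lt_of_le hsε_pos (hxball x hx).1.le
    rw [Real.norm_eq_abs, abs_mul, abs_mul,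
      abs_of_nonneg (Real.rpow_nonneg hX.le _), abs_of_pos (by linarith : (0:ℝ) < 2 * x)]
    rw [hB]
    have h2x : 2 * x ≤ 2 * (s + ε) := by linarith [(hxball x hx).2]
    have hq := key2 x hx p hp'
    have hmax : (0:ℝ) ≤ ((s - ε) ^ 2 - s₀ ^ 2) ^ (c - 1) ⊔ ((s + ε) ^ 2 + 2 * C) ^ (c - 1) :=
      le_trans (Real.rpow_nonneg hδ.le _) (le_max_left _ _)
    have hXp : (0:ℝ) ≤ (x ^ 2 - 2 * Ω p) ^ (c - 1) := Real.rpow_nonneg hX.le _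
    calc 2 * x * |c| * (x ^ 2 - 2 * Ω p) ^ (c - 1)
        ≤ 2 * (s + ε) * |c| * (x ^ 2 - 2 * Ω p) ^ (c - 1) := by
          apply mul_le_mul_of_nonneg_right _ hXp
          exact mul_le_mul_of_nonneg_right h2x (abs_nonneg c)
      _ ≤ 2 * (s + ε) * |c| * (((s - ε) ^ 2 - s₀ ^ 2) ^ (c - 1)
            ⊔ ((s + ε) ^ 2 + 2 * C) ^ (c - 1)) := by
          apply mul_le_mul_of_nonneg_left hq
          positivity
      _ = |c| * (((s - ε) ^ 2 - s₀ ^ 2) ^ (c - 1)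
            ⊔ ((s + ε) ^ 2 + 2 * C) ^ (c - 1)) * (2 * (s + ε)) := by ring
  · exact intervalIntegrable_const
  · apply ae_of_all
    intro p hp x hx
    have hp' : p ∈ Icc (0:ℝ) 1 := hIsub hp
    have h1 : HasDerivAt (fun x : ℝ => x ^ 2 - 2 * Ω p) (2 * x) x := by
      simpa using ((hasDerivAt_pow 2 x).sub_const (2 * Ω p))
    exact h1.rpow_const (Or.inl (ne_of_gt (keypos x hx p hp')))

lemma aux_deriv_d (Ω : ℝ → ℝ) (hΩc : ContinuousOn Ω (Icc 0 1)) {s₀ : ℝ} (hs₀ : 0 ≤ s₀)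
    (hub : ∀ p ∈ Icc (0:ℝ) 1, 2 * Ω p ≤ s₀ ^ 2) {s : ℝ} (hs : s₀ < s) :
    HasDerivAt (fun x => ∫ p in (0:ℝ)..1, (x ^ 2 - 2 * Ω p) ^ (-(1/2) : ℝ))
      (-(s * ∫ p in (0:ℝ)..1, (s ^ 2 - 2 * Ω p) ^ (-(3/2) : ℝ))) s := by
  have h := aux_deriv Ω hΩc hs₀ hub (-(1/2)) hs
  have e1 : (∫ p in (0:ℝ)..1, 2 * s * (-(1/2):ℝ) * (s ^ 2 - 2 * Ω p) ^ ((-(1/2):ℝ) - 1))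
      = ∫ p in (0:ℝ)..1, (-s) * (s ^ 2 - 2 * Ω p) ^ (-(3/2) : ℝ) := by
    congr 1; funext p
    rw [show ((-(1/2):ℝ) - 1) = (-(3/2) : ℝ) by norm_num]; ring
  rw [e1, intervalIntegral.integral_const_mul] at h
  convert h using 1; ring

lemma aux_deriv_A (Ω : ℝ → ℝ) (hΩc : ContinuousOn Ω (Icc 0 1)) {s₀ : ℝ} (hs₀ : 0 ≤ s₀)
    (hub : ∀ p ∈ Icc (0:ℝ) 1, 2 * Ω p ≤ s₀ ^ 2) {s : ℝ} (hs : s₀ < s) :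
    HasDerivAt (fun x => ∫ p in (0:ℝ)..1, (x ^ 2 - 2 * Ω p) ^ ((1/2) : ℝ))
      (s * ∫ p in (0:ℝ)..1, (s ^ 2 - 2 * Ω p) ^ (-(1/2) : ℝ)) s := by
  have h := aux_deriv Ω hΩc hs₀ hub (1/2) hs
  have e1 : (∫ p in (0:ℝ)..1, 2 * s * ((1/2):ℝ) * (s ^ 2 - 2 * Ω p) ^ (((1/2):ℝ) - 1))
      = ∫ p in (0:ℝ)..1, s * (s ^ 2 - 2 * Ω p) ^ (-(1/2) : ℝ) := by
    congr 1; funext p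
    rw [show (((1/2):ℝ) - 1) = (-(1/2) : ℝ) by norm_num]; ring
  rw [e1, intervalIntegral.integral_const_mul] at h
  exact h

lemma aux_sq (h : ℝ → ℝ) (hc : ContinuousOn h (Icc 0 1)) :
    ∫ p in (0:ℝ)..1, (∫ τ in (0:ℝ)..p, h τ) * h p = (∫ τ in (0:ℝ)..1, h τ) ^ 2 / 2 := by
  set Hf := fun p => ∫ τ in (0:ℝ)..p, h τ with hHf
  have hHc : ContinuousOn Hf (Icc 0 1) := by
    have := intervalIntegral.continuousOn_primitive_interval
      (f := h) (μ := volume) (a := 0) (b := 1)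
      (by rw [uIcc_of_le zero_le_one]; exact hc.integrableOn_Icc)
    rwa [uIcc_of_le zero_le_one] at this
  have hderiv : ∀ p ∈ Ioo (0:ℝ) 1, HasDerivAt Hf (h p) p := by
    intro p hp
    apply intervalIntegral.integral_hasDerivAt_right
    · apply ContinuousOn.intervalIntegrable
      rw [uIcc_of_le hp.1.le]
      exact hc.mono (Icc_subset_Icc le_rfl hp.2.le)
    · exact (hc.mono Ioo_subset_Icc_self).stronglyMeasurableAtFilter isOpen_Ioo p hp
    · exact (hc.mono Ioo_subset_Icc_self).continuousAt (Ioo_mem_nhds hp.1 hp.2)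
  have key := intervalIntegral.integral_eq_sub_of_hasDeriv_right_of_le
    (f := fun p => Hf p ^ 2 / 2) (f' := fun p => Hf p * h p) zero_le_one
    ((hHc.pow 2).div_const 2)
    (fun p hp => by
      have := ((hderiv p hp).pow 2).div_const 2
      have h2 : HasDerivAt (fun p => Hf p ^ 2 / 2) (Hf p * h p) p := by
        refine this.congr_deriv ?_; ring
      exact h2.hasDerivWithinAt)
    (by apply ContinuousOn.intervalIntegrable; rw [uIcc_of_le zero_le_one]; exact hHc.mul hc)
  rw [key]
  simp [hHf, intervalIntegral.integral_same]

lemma aux_mul_rpow {X : ℝ} (hX : 0 < X) : X * X ^ (-(1/2) : ℝ) = X ^ ((1/2) : ℝ) := by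
  calc X * X ^ (-(1/2) : ℝ) = X ^ (1:ℝ) * X ^ (-(1/2) : ℝ) := by rw [Real.rpow_one]
    _ = X ^ ((1:ℝ) + -(1/2)) := (Real.rpow_add hX _ _).symm
    _ = X ^ ((1/2) : ℝ) := by norm_num

lemma aux_sq_rpow {X : ℝ} (hX : 0 < X) : (X ^ (-(1/2) : ℝ)) ^ 2 = X⁻¹ := by
  rw [← Real.rpow_natCast (X ^ (-(1/2) : ℝ)) 2, ← Real.rpow_mul hX.le]
  norm_num
  exact Real.rpow_neg_one X

lemma aux_inv_sq {s : ℝ} (hs : 0 < s) : (s ^ 2) ^ (-(1/2) : ℝ) = s⁻¹ := by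
  rw [← Real.rpow_natCast s 2, ← Real.rpow_mul hs.le]
  norm_num
  exact Real.rpow_neg_one s

lemma aux_pt (s Ωp Ω1 r H : ℝ) (hX : 0 < s ^ 2 - 2 * Ωp) :
    (1 / (2 * ((s ^ 2 - 2 * Ωp) ^ (-(1/2) : ℝ)) ^ 2) - H - Ωp + Ω1 + r)
        * (s ^ 2 - 2 * Ωp) ^ (-(1/2) : ℝ)
      = (s ^ 2 - 2 * Ωp) ^ ((1/2) : ℝ)
        - (s ^ 2 / 2 - Ω1 - r) * (s ^ 2 - 2 * Ωp) ^ (-(1/2) : ℝ)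
        - H * (s ^ 2 - 2 * Ωp) ^ (-(1/2) : ℝ) := by
  have e1 := aux_sq_rpow hX
  have e2 := aux_mul_rpow hX
  rw [e1, ← e2]
  have h3 : 1 / (2 * (s ^ 2 - 2 * Ωp)⁻¹) = (s ^ 2 - 2 * Ωp) / 2 := by
    field_simp
  rw [h3]
  ring

set_option maxHeartbeats 1000000 in
theorem stmt7 (ω Ω : ℝ → ℝ) (hωcont : ContinuousOn ω (Icc 0 1))
    (hΩ : ∀ p, Ω p = ∫ t in (0:ℝ)..p, ω t)
    (s₀ : ℝ) (hs₀ : s₀ = Real.sqrt (sSup ((fun p => 2 * Ω p) '' Icc (0:ℝ) 1)))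
    (Hp H : ℝ → ℝ → ℝ)
    (hHp : ∀ p s, Hp p s = (s ^ 2 - 2 * Ω p) ^ (-(1/2) : ℝ))
    (hH : ∀ p s, H p s = ∫ τ in (0:ℝ)..p, Hp τ s)
    (d R : ℝ → ℝ) (hd : ∀ s, d s = H 1 s)
    (hR : ∀ s, R s = s ^ 2 / 2 - Ω 1 + d s)
    (σ : ℝ → ℝ → ℝ)
    (hσ : ∀ s r, σ s r = ∫ p in (0:ℝ)..1,
        (1 / (2 * (Hp p s) ^ 2) - H p s - Ω p + Ω 1 + r) * Hp p s)
    (r sm sc sp : ℝ)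
    (h1 : s₀ < sm) (h2 : sm < sc) (h3 : sc < sp)
    (hRm : R sm = r) (hRp : R sp = r)
    (hsign1 : ∀ s ∈ Ioo sm sp, R s < r)
    (hsign2 : ∀ s ∈ Ioo s₀ sm, r < R s)
    (hsign3 : ∀ s ∈ Ioi sp, r < R s) :
    StrictMonoOn (fun s => σ s r) (Ioo s₀ sm) ∧
    StrictAntiOn (fun s => σ s r) (Ioo sm sp) ∧
    StrictMonoOn (fun s => σ s r) (Ioi sp) ∧
    Tendsto (fun s => σ s r) atTop atTop := by
  -- basic setup
  have hΩc : ContinuousOn Ω (Icc 0 1) := by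
    have hint : IntegrableOn ω (uIcc (0:ℝ) 1) := by
      rw [uIcc_of_le zero_le_one]; exact hωcont.integrableOn_Icc
    have hcont := intervalIntegral.continuousOn_primitive_interval
      (f := ω) (μ := volume) (a := 0) (b := 1) hint
    rw [uIcc_of_le zero_le_one] at hcont
    exact hcont.congr (fun x _ => hΩ x)
  have hs₀0 : 0 ≤ s₀ := hs₀ ▸ Real.sqrt_nonneg _
  have hub : ∀ p ∈ Icc (0:ℝ) 1, 2 * Ω p ≤ s₀ ^ 2 := by
    intro p hp
    have hbdd : BddAbove ((fun p => 2 * Ω p) '' Icc (0:ℝ) 1) :=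
      (isCompact_Icc.image_of_continuousOn (continuousOn_const.mul hΩc)).bddAbove
    have hle : 2 * Ω p ≤ sSup ((fun p => 2 * Ω p) '' Icc (0:ℝ) 1) :=
      le_csSup hbdd ⟨p, hp, rfl⟩
    rcases le_or_gt 0 (sSup ((fun p => 2 * Ω p) '' Icc (0:ℝ) 1)) with h | h
    · rw [hs₀, Real.sq_sqrt h]; exact hle
    · exact hle.trans (h.le.trans (by positivity))
  have hpos : ∀ s, s₀ < s → ∀ p ∈ Icc (0:ℝ) 1, 0 < s ^ 2 - 2 * Ω p := by
    intro s hss p hp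
    have h1' : s₀ ^ 2 < s ^ 2 := by nlinarith
    linarith [hub p hp]
  -- abbreviations
  set df := fun x : ℝ => ∫ p in (0:ℝ)..1, (x ^ 2 - 2 * Ω p) ^ (-(1/2) : ℝ) with hdf
  set Af := fun x : ℝ => ∫ p in (0:ℝ)..1, (x ^ 2 - 2 * Ω p) ^ ((1/2) : ℝ) with hAf
  set ef := fun x : ℝ => ∫ p in (0:ℝ)..1, (x ^ 2 - 2 * Ω p) ^ (-(3/2) : ℝ) with hef
  have hint : ∀ (c : ℝ) (x : ℝ), s₀ < x →
      IntervalIntegrable (fun p => (x ^ 2 - 2 * Ω p) ^ c) volume 0 1 := by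
    intro c x hx
    apply ContinuousOn.intervalIntegrable
    rw [uIcc_of_le zero_le_one]
    exact aux_cont Ω hΩc c x (hpos x hx)
  have hd_df : ∀ x, d x = df x := by
    intro x
    rw [hd, hH, hdf]
    exact intervalIntegral.integral_congr (fun τ _ => by rw [hHp])
  have hedf : ∀ x, s₀ < x → HasDerivAt df (-(x * ef x)) x :=
    fun x hx => aux_deriv_d Ω hΩc hs₀0 hub hx
  have heAf : ∀ x, s₀ < x → HasDerivAt Af (x * df x) x :=
    fun x hx => aux_deriv_A Ω hΩc hs₀0 hub hx
  have hef_pos : ∀ x, s₀ < x → 0 < ef x := by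
    intro x hx
    apply intervalIntegral.intervalIntegral_pos_of_pos_on (hint _ x hx)
    · intro p hp
      exact Real.rpow_pos_of_pos (hpos x hx p (Ioo_subset_Icc_self hp)) _
    · exact zero_lt_one
  -- the closed form for σ
  have hσF : ∀ s, s₀ < s →
      σ s r = Af s - (s ^ 2 / 2 - Ω 1 - r) * df s - (df s) ^ 2 / 2 := by
    intro s hss
    rw [hσ]
    have hcongr : ∀ p ∈ uIcc (0:ℝ) 1,
        (1 / (2 * (Hp p s) ^ 2) - H p s - Ω p + Ω 1 + r) * Hp p s
        = (s ^ 2 - 2 * Ω p) ^ ((1/2) : ℝ)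
          - (s ^ 2 / 2 - Ω 1 - r) * (s ^ 2 - 2 * Ω p) ^ (-(1/2) : ℝ)
          - (∫ τ in (0:ℝ)..p, (s ^ 2 - 2 * Ω τ) ^ (-(1/2) : ℝ))
              * (s ^ 2 - 2 * Ω p) ^ (-(1/2) : ℝ) := by
      intro p hp
      rw [uIcc_of_le zero_le_one] at hp
      have hHint : H p s = ∫ τ in (0:ℝ)..p, (s ^ 2 - 2 * Ω τ) ^ (-(1/2) : ℝ) := by
        rw [hH]
        exact intervalIntegral.integral_congr (fun τ _ => by rw [hHp])
      rw [hHp, hHint]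
      exact aux_pt s (Ω p) (Ω 1) r _ (hpos s hss p hp)
    rw [intervalIntegral.integral_congr hcongr]
    have i1 : IntervalIntegrable (fun p => (s ^ 2 - 2 * Ω p) ^ ((1/2) : ℝ)) volume 0 1 :=
      hint _ s hss
    have i2 : IntervalIntegrable
        (fun p => (s ^ 2 / 2 - Ω 1 - r) * (s ^ 2 - 2 * Ω p) ^ (-(1/2) : ℝ)) volume 0 1 :=
      (hint _ s hss).const_mul _
    have i3 : IntervalIntegrable
        (fun p => (∫ τ in (0:ℝ)..p, (s ^ 2 - 2 * Ω τ) ^ (-(1/2) : ℝ))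
          * (s ^ 2 - 2 * Ω p) ^ (-(1/2) : ℝ)) volume 0 1 := by
      apply ContinuousOn.intervalIntegrable
      rw [uIcc_of_le zero_le_one]
      refine ContinuousOn.mul ?_ (aux_cont Ω hΩc _ s (hpos s hss))
      have := intervalIntegral.continuousOn_primitive_interval
        (f := fun τ => (s ^ 2 - 2 * Ω τ) ^ (-(1/2) : ℝ)) (μ := volume) (a := 0) (b := 1)
        (by rw [uIcc_of_le zero_le_one]; exact (aux_cont Ω hΩc _ s (hpos s hss)).integrableOn_Icc)
      rwa [uIcc_of_le zero_le_one] at this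
    rw [intervalIntegral.integral_sub (i1.sub i2) i3, intervalIntegral.integral_sub i1 i2,
      intervalIntegral.integral_const_mul,
      aux_sq (fun τ => (s ^ 2 - 2 * Ω τ) ^ (-(1/2) : ℝ)) (aux_cont Ω hΩc _ s (hpos s hss))]
  -- derivative of the closed form
  set F := fun x : ℝ => Af x - (x ^ 2 / 2 - Ω 1 - r) * df x - (df x) ^ 2 / 2 with hF
  have hFD : ∀ x, s₀ < x → HasDerivAt F ((R x - r) * (x * ef x)) x := by
    intro x hx
    have hA := heAf x hx
    have hD := hedf x hx
    have h3 : HasDerivAt (fun y : ℝ => y ^ 2 / 2 - Ω 1 - r) x x := by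
      have := ((hasDerivAt_pow 2 x).div_const 2).sub_const (Ω 1)
      have := this.sub_const r
      refine this.congr_deriv ?_
      push_cast; ring
    have h4 := h3.mul hD
    have h5 : HasDerivAt (fun y => (df y) ^ 2 / 2) (df x * (-(x * ef x))) x := by
      refine ((hD.pow 2).div_const 2).congr_deriv ?_
      push_cast; ring
    have := (hA.sub h4).sub h5
    refine this.congr_deriv ?_
    rw [hR, hd_df]
    ring
  -- transfer principles
  have hmono : ∀ D : Set ℝ, D ⊆ Ioi s₀ → StrictMonoOn F D →
      StrictMonoOn (fun s => σ s r) D := by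
    intro D hD hM a ha b hb hab
    simp only
    rw [hσF a (hD ha), hσF b (hD hb)]
    exact hM ha hb hab
  have hanti : ∀ D : Set ℝ, D ⊆ Ioi s₀ → StrictAntiOn F D →
      StrictAntiOn (fun s => σ s r) D := by
    intro D hD hM a ha b hb hab
    simp only
    rw [hσF a (hD ha), hσF b (hD hb)]
    exact hM ha hb hab
  have hsm0 : (0:ℝ) ≤ sm := le_trans hs₀0 h1.le
  have hsp₀ : s₀ < sp := h1.trans (h2.trans h3)
  refine ⟨?_, ?_, ?_, ?_⟩
  · -- increasing on (s₀, sm)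
    apply hmono _ (fun x hx => hx.1)
    apply strictMonoOn_of_deriv_pos (convex_Ioo _ _)
      (fun x hx => (hFD x hx.1).continuousAt.continuousWithinAt)
    rw [interior_Ioo]
    intro x hx
    rw [(hFD x hx.1).deriv]
    have hRx : 0 < R x - r := sub_pos.2 (hsign2 x hx)
    have hx0 : 0 < x := lt_of_le_of_lt hs₀0 hx.1
    exact mul_pos hRx (mul_pos hx0 (hef_pos x hx.1))
  · -- decreasing on (sm, sp)
    apply hanti _ (fun x hx => lt_trans h1 hx.1)
    apply strictAntiOn_of_deriv_neg (convex_Ioo _ _)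
      (fun x hx => (hFD x (h1.trans hx.1)).continuousAt.continuousWithinAt)
    rw [interior_Ioo]
    intro x hx
    rw [(hFD x (h1.trans hx.1)).deriv]
    have hRx : R x - r < 0 := sub_neg.2 (hsign1 x hx)
    have hx0 : 0 < x := lt_of_le_of_lt hsm0 hx.1
    exact mul_neg_of_neg_of_pos hRx (mul_pos hx0 (hef_pos x (h1.trans hx.1)))
  · -- increasing on (sp, ∞)
    apply hmono _ (fun x hx => lt_trans hsp₀ hx)
    apply strictMonoOn_of_deriv_pos (convex_Ioi _)
      (fun x hx => (hFD x (hsp₀.trans hx)).continuousAt.continuousWithinAt)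
    rw [interior_Ioi]
    intro x hx
    rw [(hFD x (hsp₀.trans hx)).deriv]
    have hRx : 0 < R x - r := sub_pos.2 (hsign3 x hx)
    have hx0 : 0 < x := lt_of_le_of_lt hs₀0 (hsp₀.trans hx)
    exact mul_pos hRx (mul_pos hx0 (hef_pos x (hsp₀.trans hx)))
  · -- tendsto atTop
    obtain ⟨C, hC⟩ := isCompact_Icc.exists_bound_of_continuousOn hΩc
    have hC0 : 0 ≤ C := le_trans (norm_nonneg _) (hC 0 ⟨le_refl _, zero_le_one⟩)
    have hCabs : ∀ p ∈ Icc (0:ℝ) 1, |Ω p| ≤ C := by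
      intro p hp; simpa [Real.norm_eq_abs] using hC p hp
    set C₁ := Ω 1 + r - 2 * C with hC₁
    have key : ∀ s, s₀ < s → 1 ≤ s → 2 * C + 1 ≤ s ^ 2 →
        0 ≤ s ^ 2 / 2 - Ω 1 - r → 0 ≤ s ^ 2 / 2 - 2 * C + Ω 1 + r →
        s / 2 - |C₁| - 1 / 2 ≤ σ s r := by
      intro s hss hs1 hs2 hs3 hs4
      rw [hσF s hss]
      have hs0' : 0 < s := lt_of_lt_of_le zero_lt_one hs1
      set K := s ^ 2 - 2 * C with hK
      have hK1 : (1:ℝ) ≤ K := by rw [hK]; linarith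
      have hKpos : (0:ℝ) < K := lt_of_lt_of_le zero_lt_one hK1
      have hKle : ∀ p ∈ Icc (0:ℝ) 1, K ≤ s ^ 2 - 2 * Ω p := by
        intro p hp
        have := abs_le.mp (hCabs p hp)
        rw [hK]; linarith [this.2]
      set Km := K ^ (-(1/2) : ℝ) with hKm
      have a1 : K ^ ((1/2) : ℝ) ≤ Af s := by
        have := intervalIntegral.integral_mono_on (μ := volume)
          (f := fun _ => K ^ ((1/2) : ℝ))
          (g := fun p => (s ^ 2 - 2 * Ω p) ^ ((1/2) : ℝ)) zero_le_one
          intervalIntegrable_const (hint _ s hss)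
          (fun p hp => Real.rpow_le_rpow hKpos.le (hKle p hp) (by norm_num))
        simp only [intervalIntegral.integral_const, smul_eq_mul, sub_zero, one_mul] at this
        exact this
      have a2 : df s ≤ Km := by
        have := intervalIntegral.integral_mono_on (μ := volume)
          (f := fun p => (s ^ 2 - 2 * Ω p) ^ (-(1/2) : ℝ))
          (g := fun _ => Km) zero_le_one (hint _ s hss) intervalIntegrable_const
          (fun p hp => Real.rpow_le_rpow_of_nonpos hKpos (hKle p hp) (by norm_num))
        simp only [intervalIntegral.integral_const, smul_eq_mul, sub_zero, one_mul] at this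
        exact this
      have a3 : 0 ≤ df s :=
        intervalIntegral.integral_nonneg zero_le_one
          (fun p hp => (Real.rpow_pos_of_pos (hpos s hss p hp) _).le)
      have hKm0 : 0 ≤ Km := (Real.rpow_pos_of_pos hKpos _).le
      have b0 : K ^ ((1/2) : ℝ) - (s ^ 2 / 2 - Ω 1 - r) * Km - Km ^ 2 / 2
          ≤ Af s - (s ^ 2 / 2 - Ω 1 - r) * df s - (df s) ^ 2 / 2 := by
        have h6 : (s ^ 2 / 2 - Ω 1 - r) * df s ≤ (s ^ 2 / 2 - Ω 1 - r) * Km :=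
          mul_le_mul_of_nonneg_left a2 hs3
        have h7 : (df s) ^ 2 ≤ Km ^ 2 := pow_le_pow_left₀ a3 a2 2
        linarith
      have b1 : K * Km = K ^ ((1/2) : ℝ) := aux_mul_rpow hKpos
      have b2 : s⁻¹ ≤ Km := by
        have h8 : K ≤ s ^ 2 := by rw [hK]; linarith
        have := Real.rpow_le_rpow_of_nonpos hKpos h8 (by norm_num : (-(1/2) : ℝ) ≤ 0)
        rwa [aux_inv_sq hs0'] at this
      have b5 : Km ^ 2 ≤ 1 := by
        have : Km ≤ 1 := by
          have := Real.rpow_le_rpow_of_nonpos zero_lt_one hK1 (by norm_num : (-(1/2) : ℝ) ≤ 0)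
          rwa [Real.one_rpow] at this
        nlinarith
      -- K^{1/2} - cc*Km = (K - cc)*Km ≥ (K - cc)/s
      have hKcc : 0 ≤ K - (s ^ 2 / 2 - Ω 1 - r) := by rw [hK]; linarith
      have b3 : (K - (s ^ 2 / 2 - Ω 1 - r)) * s⁻¹ ≤ (K - (s ^ 2 / 2 - Ω 1 - r)) * Km :=
        mul_le_mul_of_nonneg_left b2 hKcc
      have b4 : (K - (s ^ 2 / 2 - Ω 1 - r)) * s⁻¹ = s / 2 + C₁ / s := by
        rw [hK, hC₁]
        field_simp
        ring
      have b6 : -|C₁| ≤ C₁ / s := by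
        rcases le_or_gt 0 C₁ with h | h
        · have : (0:ℝ) ≤ C₁ / s := div_nonneg h hs0'.le
          linarith [abs_nonneg C₁]
        · rw [abs_of_neg h, neg_neg, le_div_iff₀ hs0']
          calc C₁ * s ≤ C₁ * 1 := mul_le_mul_of_nonpos_left hs1 h.le
            _ = C₁ := mul_one _
      have c1 : s / 2 + C₁ / s ≤ (K - (s ^ 2 / 2 - Ω 1 - r)) * Km := b4 ▸ b3
      have c3 : (K - (s ^ 2 / 2 - Ω 1 - r)) * Km
          = K ^ ((1/2) : ℝ) - (s ^ 2 / 2 - Ω 1 - r) * Km := by rw [← b1]; ring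
      linarith [b0, c1, c3, b5, b6]
    -- conclude
    have hev : ∀ᶠ s in atTop, s / 2 - |C₁| - 1 / 2 ≤ σ s r := by
      filter_upwards [eventually_gt_atTop s₀, eventually_ge_atTop (1:ℝ),
        eventually_ge_atTop (2*C+1), eventually_ge_atTop (2*(Ω 1 + r)),
        eventually_ge_atTop (2*(2*C - Ω 1 - r))] with s e1 e2 e3 e4 e5
      have hss : s ≤ s ^ 2 := by nlinarith
      exact key s e1 e2 (by nlinarith) (by nlinarith) (by nlinarith)
    apply tendsto_atTop_mono' atTop hev
    have : Tendsto (fun s : ℝ => s / 2 + (-|C₁| - 1/2)) atTop atTop :=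
      tendsto_atTop_add_const_right atTop _ (Tendsto.atTop_div_const (by norm_num) tendsto_id)
    convert this using 2
    ring
end

section
/- For any real constant F, the function κ(s;r) = 2(F - σ(s;r)) - (r - R(s))² satisfies ∂_s κ(s;r) = 2s(r - R(s)). Consequently, for r ∈ (R_c, R_0), κ(·;r) is strictly decreasing on (s₀, s₋(r)), strictly increasing on (s₋(r), s₊(r)), and strictly decreasing on (s₊(r), ∞) with κ(s;r) → -∞ as s → ∞. -/
open Real MeasureTheory Set Filter Topology

theorem stmt8 (ω Ω : ℝ → ℝ) (hωcont : ContinuousOn ω (Icc 0 1))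
    (hΩ : ∀ p, Ω p = ∫ t in (0:ℝ)..p, ω t)
    (s₀ : ℝ) (hs₀ : s₀ = Real.sqrt (sSup ((fun p => 2 * Ω p) '' Icc (0:ℝ) 1)))
    (Hp H : ℝ → ℝ → ℝ)
    (hHp : ∀ p s, Hp p s = (s ^ 2 - 2 * Ω p) ^ (-(1/2) : ℝ))
    (hH : ∀ p s, H p s = ∫ τ in (0:ℝ)..p, Hp τ s)
    (d R : ℝ → ℝ) (hd : ∀ s, d s = H 1 s)
    (hR : ∀ s, R s = s ^ 2 / 2 - Ω 1 + d s)
    (σ : ℝ → ℝ → ℝ)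
    (hσ : ∀ s r, σ s r = ∫ p in (0:ℝ)..1,
        (1 / (2 * (Hp p s) ^ 2) - H p s - Ω p + Ω 1 + r) * Hp p s)
    (r sm sp : ℝ) (F : ℝ) (κ : ℝ → ℝ)
    (hκ : ∀ s, κ s = 2 * (F - σ s r) - (r - R s) ^ 2)
    (h1 : s₀ < sm) (h2 : sm < sp)
    (hRm : R sm = r) (hRp : R sp = r)
    (hsign1 : ∀ s ∈ Ioo sm sp, R s < r)
    (hsign2 : ∀ s ∈ Ioo s₀ sm, r < R s)
    (hsign3 : ∀ s ∈ Ioi sp, r < R s) :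
    (∀ s, s₀ < s → HasDerivAt κ (2 * s * (r - R s)) s) ∧
    StrictAntiOn κ (Ioo s₀ sm) ∧ StrictMonoOn κ (Ioo sm sp) ∧
    StrictAntiOn κ (Ioi sp) ∧ Tendsto κ atTop atBot := by
  have h01 : (0:ℝ) ≤ 1 := by norm_num
  have huIcc : uIcc (0:ℝ) 1 = Icc 0 1 := uIcc_of_le h01
  -- continuity of Ω
  have hΩc : ContinuousOn Ω (Icc 0 1) := by
    have : ContinuousOn (fun p => ∫ t in (0:ℝ)..p, ω t) (Icc 0 1) := by
      have := intervalIntegral.continuousOn_primitive_interval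
        (a := 0) (b := 1) (f := ω) (μ := volume)
        (by rw [huIcc]; exact hωcont.integrableOn_Icc)
      rwa [huIcc] at this
    exact this.congr (fun p _ => hΩ p)
  have hs₀0 : 0 ≤ s₀ := hs₀ ▸ Real.sqrt_nonneg _
  -- bound on 2Ω
  have hbound : ∀ p ∈ Icc (0:ℝ) 1, 2 * Ω p ≤ s₀ ^ 2 := by
    intro p hp
    set M := sSup ((fun p => 2 * Ω p) '' Icc (0:ℝ) 1) with hM
    have hcomp : IsCompact ((fun p => 2 * Ω p) '' Icc (0:ℝ) 1) :=
      isCompact_Icc.image_of_continuousOn (continuousOn_const.mul hΩc)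
    have h2 : 2 * Ω p ≤ M := le_csSup hcomp.bddAbove (mem_image_of_mem _ hp)
    have : M ≤ s₀ ^ 2 := by
      rw [hs₀]
      rcases le_or_gt 0 M with hM0 | hM0
      · rw [Real.sq_sqrt hM0]
      · have : Real.sqrt M = 0 := Real.sqrt_eq_zero_of_nonpos hM0.le
        rw [this]; nlinarith
    linarith
  have hX : ∀ s, s₀ < s → ∀ p ∈ Icc (0:ℝ) 1, 0 < s ^ 2 - 2 * Ω p := by
    intro s hs p hp
    have := hbound p hp
    nlinarith
  -- Hp in sqrt form
  have hHpEq : ∀ s, s₀ < s → ∀ p ∈ Icc (0:ℝ) 1,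
      Hp p s = (Real.sqrt (s ^ 2 - 2 * Ω p))⁻¹ := by
    intro s hs p hp
    rw [hHp, Real.rpow_neg (hX s hs p hp).le, ← Real.sqrt_eq_rpow]
  -- continuity facts for fixed s > s₀
  have hHpc : ∀ s, s₀ < s → ContinuousOn (fun p => Hp p s) (Icc 0 1) := by
    intro s hs
    have : ContinuousOn (fun p => (Real.sqrt (s ^ 2 - 2 * Ω p))⁻¹) (Icc 0 1) := by
      apply ContinuousOn.inv₀
      · exact (continuousOn_const.sub (continuousOn_const.mul hΩc)).sqrt
      · intro p hp
        exact (Real.sqrt_pos.2 (hX s hs p hp)).ne'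
    exact this.congr (hHpEq s hs)
  have hHc : ∀ s, s₀ < s → ContinuousOn (fun p => H p s) (Icc 0 1) := by
    intro s hs
    have : ContinuousOn (fun p => ∫ τ in (0:ℝ)..p, Hp τ s) (Icc 0 1) := by
      have := intervalIntegral.continuousOn_primitive_interval
        (a := 0) (b := 1) (f := fun τ => Hp τ s) (μ := volume)
        (by rw [huIcc]; exact (hHpc s hs).integrableOn_Icc)
      rwa [huIcc] at this
    exact this.congr (fun p _ => hH p s)
  -- derivative of H in p at interior points
  have hHderiv : ∀ s, s₀ < s → ∀ p ∈ Ioo (0:ℝ) 1,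
      HasDerivAt (fun q => H q s) (Hp p s) p := by
    intro s hs p hp
    have heq : (fun q => H q s) = fun q => ∫ τ in (0:ℝ)..q, Hp τ s :=
      funext fun q => hH q s
    rw [heq]
    have hsub : Icc (0:ℝ) p ⊆ Icc 0 1 := Icc_subset_Icc le_rfl hp.2.le
    apply intervalIntegral.integral_hasDerivAt_right
    · apply ContinuousOn.intervalIntegrable
      rw [uIcc_of_le hp.1.le]
      exact (hHpc s hs).mono hsub
    · exact (ContinuousOn.stronglyMeasurableAtFilter isOpen_Ioo
        ((hHpc s hs).mono Ioo_subset_Icc_self) p hp)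
    · exact ((hHpc s hs).mono Ioo_subset_Icc_self).continuousAt
        (isOpen_Ioo.mem_nhds hp)
  have hH0 : ∀ s, H 0 s = 0 := by
    intro s; rw [hH]; exact intervalIntegral.integral_same
  -- σ closed form
  set A : ℝ → ℝ := fun s => ∫ p in (0:ℝ)..1, Real.sqrt (s ^ 2 - 2 * Ω p) with hA
  have hdint : ∀ s, s₀ < s → d s = ∫ p in (0:ℝ)..1, Hp p s := by
    intro s hs; rw [hd, hH]
  have hσEq : ∀ s, s₀ < s →
      σ s r = A s - (s ^ 2 / 2 - Ω 1 - r) * d s - (d s) ^ 2 / 2 := by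
    intro s hs
    set u : ℝ := s ^ 2 / 2 - Ω 1 - r with hu
    have hptw : ∀ p ∈ uIcc (0:ℝ) 1,
        (1 / (2 * (Hp p s) ^ 2) - H p s - Ω p + Ω 1 + r) * Hp p s
          = Real.sqrt (s ^ 2 - 2 * Ω p) - u * Hp p s - H p s * Hp p s := by
      intro p hp
      rw [huIcc] at hp
      have hXp := hX s hs p hp
      have hsq : Real.sqrt (s ^ 2 - 2 * Ω p) * Real.sqrt (s ^ 2 - 2 * Ω p)
          = s ^ 2 - 2 * Ω p := Real.mul_self_sqrt hXp.le
      have hne : Real.sqrt (s ^ 2 - 2 * Ω p) ≠ 0 := (Real.sqrt_pos.2 hXp).ne'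
      rw [hHpEq s hs p hp]
      field_simp
      rw [hu]
      linear_combination (-1:ℝ) * hsq
    rw [hσ, intervalIntegral.integral_congr hptw]
    have hInt1 : IntervalIntegrable (fun p => Real.sqrt (s ^ 2 - 2 * Ω p)) volume 0 1 := by
      apply ContinuousOn.intervalIntegrable
      rw [huIcc]
      exact (continuousOn_const.sub (continuousOn_const.mul hΩc)).sqrt
    have hInt2 : IntervalIntegrable (fun p => u * Hp p s) volume 0 1 := by
      apply ContinuousOn.intervalIntegrable
      rw [huIcc]
      exact continuousOn_const.mul (hHpc s hs)
    have hInt3 : IntervalIntegrable (fun p => H p s * Hp p s) volume 0 1 := by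
      apply ContinuousOn.intervalIntegrable
      rw [huIcc]
      exact (hHc s hs).mul (hHpc s hs)
    rw [intervalIntegral.integral_sub (hInt1.sub hInt2) hInt3,
        intervalIntegral.integral_sub hInt1 hInt2,
        intervalIntegral.integral_const_mul]
    have hHHp : ∫ p in (0:ℝ)..1, H p s * Hp p s = (d s) ^ 2 / 2 := by
      have := intervalIntegral.integral_eq_sub_of_hasDeriv_right_of_le h01
        (f := fun p => H p s ^ 2 / 2) (f' := fun p => H p s * Hp p s)
        (((hHc s hs).pow 2).div_const 2)
        (fun p hp => by
          have h' := ((hHderiv s hs p hp).pow 2).div_const 2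
          refine h'.hasDerivWithinAt.congr_deriv ?_
          push_cast
          ring)
        hInt3
      have this2 : (∫ p in (0:ℝ)..1, H p s * Hp p s) = H 1 s ^ 2 / 2 - H 0 s ^ 2 / 2 := this
      rw [this2, hH0, hd]
      ring
    rw [hHHp, ← hdint s hs]
  -- derivative of A
  have hA' : ∀ s, s₀ < s → HasDerivAt A (s * d s) s := by
    intro s hs
    set ε : ℝ := (s - s₀) / 2 with hε
    have hε0 : 0 < ε := by simp only [hε]; linarith
    have hball : ∀ x ∈ Metric.ball s ε, s₀ < x ∧ x ≤ s + ε := by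
      intro x hx
      rw [Metric.mem_ball, Real.dist_eq, abs_lt] at hx
      constructor <;> [skip; linarith]
      have : s - ε = s₀ + ε := by rw [hε]; ring
      linarith
    set δ : ℝ := ((s + s₀) / 2) ^ 2 - s₀ ^ 2 with hδ
    have hδ0 : 0 < δ := by rw [hδ]; nlinarith
    have hXδ : ∀ x ∈ Metric.ball s ε, ∀ p ∈ Icc (0:ℝ) 1, δ ≤ x ^ 2 - 2 * Ω p := by
      intro x hx p hp
      obtain ⟨hx1, _⟩ := hball x hx
      have h2Ω := hbound p hp
      have hxhalf : (s + s₀) / 2 ≤ x := by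
        rw [Metric.mem_ball, Real.dist_eq, abs_lt] at hx
        rw [hε] at hx
        linarith [hx.1]
      have : ((s + s₀) / 2) ^ 2 ≤ x ^ 2 := by nlinarith
      rw [hδ]; nlinarith
    have hmeasF : ∀ x : ℝ, AEStronglyMeasurable (fun p => Real.sqrt (x ^ 2 - 2 * Ω p))
        (volume.restrict (uIoc (0:ℝ) 1)) := by
      intro x
      apply ContinuousOn.aestronglyMeasurable _ measurableSet_uIoc
      have : uIoc (0:ℝ) 1 ⊆ Icc 0 1 := by
        rw [uIoc_of_le h01]; exact Ioc_subset_Icc_self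
      exact ((continuousOn_const.sub (continuousOn_const.mul hΩc)).sqrt).mono this
    have key := intervalIntegral.hasDerivAt_integral_of_dominated_loc_of_deriv_le
      (F := fun x p => Real.sqrt (x ^ 2 - 2 * Ω p))
      (F' := fun x p => x * (Real.sqrt (x ^ 2 - 2 * Ω p))⁻¹)
      (x₀ := s) (a := 0) (b := 1) (μ := volume)
      (bound := fun _ => (|s| + ε) * (Real.sqrt δ)⁻¹) (Metric.ball_mem_nhds s hε0)
      (Eventually.of_forall hmeasF)
      (by
        apply ContinuousOn.intervalIntegrable
        rw [huIcc]
        exact (continuousOn_const.sub (continuousOn_const.mul hΩc)).sqrt)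
      (by
        apply ContinuousOn.aestronglyMeasurable _ measurableSet_uIoc
        have hsub : uIoc (0:ℝ) 1 ⊆ Icc 0 1 := by
          rw [uIoc_of_le h01]; exact Ioc_subset_Icc_self
        apply ContinuousOn.mono _ hsub
        apply continuousOn_const.mul
        apply ContinuousOn.inv₀
        · exact (continuousOn_const.sub (continuousOn_const.mul hΩc)).sqrt
        · intro p hp
          exact (Real.sqrt_pos.2 (hX s hs p hp)).ne')
      (by
        apply Eventually.of_forall
        intro p hp x hx
        have hp' : p ∈ Icc (0:ℝ) 1 := by
          rw [uIoc_of_le h01] at hp; exact Ioc_subset_Icc_self hp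
        have hXp := hXδ x hx p hp'
        have hsqrt : Real.sqrt δ ≤ Real.sqrt (x ^ 2 - 2 * Ω p) := Real.sqrt_le_sqrt hXp
        have hsδ : 0 < Real.sqrt δ := Real.sqrt_pos.2 hδ0
        rw [Real.norm_eq_abs, abs_mul, abs_inv, abs_of_nonneg (Real.sqrt_nonneg _)]
        have hxabs : |x| ≤ |s| + ε := by
          rw [Metric.mem_ball, Real.dist_eq] at hx
          calc |x| = |s + (x - s)| := by ring_nf
            _ ≤ |s| + |x - s| := abs_add_le _ _
            _ ≤ |s| + ε := by linarith [hx.le]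
        have hinv : (Real.sqrt (x ^ 2 - 2 * Ω p))⁻¹ ≤ (Real.sqrt δ)⁻¹ :=
          inv_anti₀ hsδ hsqrt
        have h0 : 0 ≤ (Real.sqrt (x ^ 2 - 2 * Ω p))⁻¹ := by positivity
        have h0' : 0 ≤ |s| + ε := by positivity
        exact mul_le_mul hxabs hinv h0 h0')
      intervalIntegrable_const
      (by
        apply Eventually.of_forall
        intro p hp x hx
        have hp' : p ∈ Icc (0:ℝ) 1 := by
          rw [uIoc_of_le h01] at hp; exact Ioc_subset_Icc_self hp
        have hXp : 0 < x ^ 2 - 2 * Ω p := lt_of_lt_of_le hδ0 (hXδ x hx p hp')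
        have hinner : HasDerivAt (fun y : ℝ => y ^ 2 - 2 * Ω p) (2 * x) x := by
          simpa using (hasDerivAt_pow 2 x).sub_const (2 * Ω p)
        have houter := (Real.hasDerivAt_sqrt hXp.ne').comp x hinner
        have : 1 / (2 * Real.sqrt (x ^ 2 - 2 * Ω p)) * (2 * x)
            = x * (Real.sqrt (x ^ 2 - 2 * Ω p))⁻¹ := by
          have hne : Real.sqrt (x ^ 2 - 2 * Ω p) ≠ 0 := (Real.sqrt_pos.2 hXp).ne'
          field_simp
        rw [this] at houter
        exact houter)
    have hval : ∫ p in (0:ℝ)..1, s * (Real.sqrt (s ^ 2 - 2 * Ω p))⁻¹ = s * d s := by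
      rw [intervalIntegral.integral_const_mul, hdint s hs]
      congr 1
      apply intervalIntegral.integral_congr
      intro p hp
      rw [huIcc] at hp
      exact (hHpEq s hs p hp).symm
    rw [← hval]
    exact key.2
  -- closed form for κ and its derivative
  set g : ℝ → ℝ := fun x => 2 * F - 2 * A x - (x ^ 2 / 2 - Ω 1 - r) ^ 2 with hg
  have hκg : ∀ x ∈ Ioi s₀, κ x = g x := by
    intro x hx
    rw [hκ, hσEq x hx, hR, hg]
    ring
  have hg' : ∀ s, s₀ < s → HasDerivAt g (2 * s * (r - R s)) s := by
    intro s hs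
    have hu : HasDerivAt (fun x : ℝ => x ^ 2 / 2 - Ω 1 - r) s s := by
      have := ((hasDerivAt_pow 2 s).div_const 2).sub_const (Ω 1 + r)
      have heq : (fun x : ℝ => x ^ 2 / 2 - (Ω 1 + r)) = fun x : ℝ => x ^ 2 / 2 - Ω 1 - r := by
        funext x; ring
      rw [heq] at this
      have hcast : ((2:ℕ) : ℝ) * s ^ (2 - 1) / 2 = s := by norm_num
      rwa [hcast] at this
    have hsq := hu.pow 2
    have hAd := hA' s hs
    have hfinal := ((hAd.const_mul 2).const_sub (2 * F)).sub hsq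
    have heq2 : g = fun x => (2 * F - 2 * A x) - (x ^ 2 / 2 - Ω 1 - r) ^ 2 := by
      funext x; rw [hg]
    rw [heq2]
    refine hfinal.congr_deriv ?_
    rw [hR]
    push_cast
    ring
  have hκ' : ∀ s, s₀ < s → HasDerivAt κ (2 * s * (r - R s)) s := by
    intro s hs
    exact (hg' s hs).congr_of_eventuallyEq
      (Filter.eventuallyEq_of_mem (isOpen_Ioi.mem_nhds hs) hκg)
  refine ⟨hκ', ?_, ?_, ?_, ?_⟩
  · -- StrictAntiOn κ (Ioo s₀ sm)
    apply strictAntiOn_of_deriv_neg (convex_Ioo _ _)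
    · intro x hx
      exact (hκ' x hx.1).continuousAt.continuousWithinAt
    · intro x hx
      rw [interior_Ioo] at hx
      rw [(hκ' x hx.1).deriv]
      have hx0 : 0 < x := lt_of_le_of_lt hs₀0 hx.1
      have := hsign2 x hx
      nlinarith
  · apply strictMonoOn_of_deriv_pos (convex_Ioo _ _)
    · intro x hx
      exact (hκ' x (lt_trans h1 hx.1)).continuousAt.continuousWithinAt
    · intro x hx
      rw [interior_Ioo] at hx
      rw [(hκ' x (lt_trans h1 hx.1)).deriv]
      have hx0 : 0 < x := lt_of_le_of_lt hs₀0 (lt_trans h1 hx.1)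
      have := hsign1 x hx
      nlinarith
  · apply strictAntiOn_of_deriv_neg (convex_Ioi _)
    · intro x hx
      exact (hκ' x (lt_trans (lt_trans h1 h2) hx)).continuousAt.continuousWithinAt
    · intro x hx
      rw [interior_Ioi] at hx
      rw [(hκ' x (lt_trans (lt_trans h1 h2) hx)).deriv]
      have hx0 : 0 < x := lt_of_le_of_lt hs₀0 (lt_trans (lt_trans h1 h2) hx)
      have := hsign3 x hx
      nlinarith
  · -- Tendsto κ atTop atBot
    have hA0 : ∀ x, 0 ≤ A x :=
      fun x => intervalIntegral.integral_nonneg h01 (fun p _ => Real.sqrt_nonneg _)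
    have hle : ∀ᶠ x in atTop, κ x ≤ 2 * F - (x ^ 2 / 2 - Ω 1 - r) ^ 2 := by
      filter_upwards [eventually_gt_atTop s₀] with x hx
      rw [hκg x hx, hg]
      nlinarith [hA0 x]
    apply tendsto_atBot_mono' atTop hle
    have h1' : Tendsto (fun x : ℝ => x ^ 2 / 2 - Ω 1 - r) atTop atTop := by
      apply tendsto_atTop_add_const_right
      apply tendsto_atTop_add_const_right
      exact (tendsto_pow_atTop two_ne_zero).atTop_div_const (by norm_num)
    have h2' : Tendsto (fun x : ℝ => (x ^ 2 / 2 - Ω 1 - r) ^ 2) atTop atTop :=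
      (tendsto_pow_atTop two_ne_zero).comp h1'
    have h3' : Tendsto (fun x : ℝ => -(x ^ 2 / 2 - Ω 1 - r) ^ 2) atTop atBot :=
      tendsto_neg_atTop_atBot.comp h2'
    have := tendsto_atBot_add_const_left atTop (2 * F) h3'
    convert this using 2 with x <;> ring
end

section
/- Let h solve the height-function problem with Bernoulli constant r, and for s = s₊(r) or s = s₋(r) (so that R(s) = r) set w = h - H(·;s). Then the surface boundary condition (1+h_q²)/(2h_p²) + h = r on p = 1 is equivalent to w_p/H_p³ - w = (w_q)²/(2h_p²) + (w_p)²(2h_p + H_p)/(2H_p³ h_p²) on p = 1. In particular, at any point q where w(q,1) > 0 one has w_p(q,1) > 0. -/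
open Real MeasureTheory Set Filter Topology

theorem stmt14 (r H1 Hp1 : ℝ) (hHp1 : 0 < Hp1) (hlam : 1 / (2 * Hp1 ^ 2) + H1 = r)
    (h hq hp : ℝ → ℝ) (hppos : ∀ q, 0 < hp q) :
    ∀ q,
      (((1 + (hq q) ^ 2) / (2 * (hp q) ^ 2) + h q = r) ↔
        ((hp q - Hp1) / Hp1 ^ 3 - (h q - H1) =
          (hq q) ^ 2 / (2 * (hp q) ^ 2)
            + (hp q - Hp1) ^ 2 * (2 * hp q + Hp1) / (2 * Hp1 ^ 3 * (hp q) ^ 2))) ∧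
      (((1 + (hq q) ^ 2) / (2 * (hp q) ^ 2) + h q = r) →
        0 < h q - H1 → 0 < hp q - Hp1) := by
  intro q
  have ha : (0:ℝ) < hp q := hppos q
  have ha' : hp q ≠ 0 := ne_of_gt ha
  have hH' : Hp1 ≠ 0 := ne_of_gt hHp1
  subst hlam
  have hiff : ((1 + (hq q) ^ 2) / (2 * (hp q) ^ 2) + h q = 1 / (2 * Hp1 ^ 2) + H1) ↔
      ((hp q - Hp1) / Hp1 ^ 3 - (h q - H1) =
        (hq q) ^ 2 / (2 * (hp q) ^ 2)
          + (hp q - Hp1) ^ 2 * (2 * hp q + Hp1) / (2 * Hp1 ^ 3 * (hp q) ^ 2)) := by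
    have key : (hp q - Hp1) / Hp1 ^ 3 - (1 / (2 * Hp1 ^ 2) - 1 / (2 * (hp q) ^ 2)) =
        (hp q - Hp1) ^ 2 * (2 * hp q + Hp1) / (2 * Hp1 ^ 3 * (hp q) ^ 2) := by
      field_simp
      ring
    have l1 : (1 + (hq q) ^ 2) / (2 * (hp q) ^ 2) =
        1 / (2 * (hp q) ^ 2) + (hq q) ^ 2 / (2 * (hp q) ^ 2) := add_div 1 _ _
    constructor <;> intro heq <;> linarith [key, l1]
  refine ⟨hiff, fun heq hw => ?_⟩
  have heq' := hiff.mp heq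
  have h1 : 0 ≤ (hq q) ^ 2 / (2 * (hp q) ^ 2) := by positivity
  have h2 : 0 ≤ (hp q - Hp1) ^ 2 * (2 * hp q + Hp1) / (2 * Hp1 ^ 3 * (hp q) ^ 2) := by
    positivity
  have : 0 < (hp q - Hp1) / Hp1 ^ 3 := by linarith
  have h4 := mul_pos this (pow_pos hHp1 3)
  rwa [div_mul_cancel₀ _ (by positivity : (Hp1:ℝ) ^ 3 ≠ 0)] at h4
end

section
/- Define the flow force flux function Φ(q,p) = ∫₀^p ( (w_p)²/(h_p H_p²) - (w_q)²/h_p ) dp' where w = h - H(·;s). Then Φ_q = -w_q( (1+(w_q)²)/h_p² - 1/H_p² ) and Φ_p = (w_p)²/(h_p H_p²) - (w_q)²/h_p, where the first identity holds pointwise in S using the equation satisfied by h. -/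
open Real MeasureTheory Set Filter Topology
open scoped Interval

theorem stmt15 (ω Ω : ℝ → ℝ) (hωc : Continuous ω) (hΩ : ∀ p, HasDerivAt Ω (ω p) p)
    (s : ℝ) (hpos : ∀ p ∈ Icc (0:ℝ) 1, 0 < s ^ 2 - 2 * Ω p)
    (Hp : ℝ → ℝ) (hHp : ∀ p, Hp p = (s ^ 2 - 2 * Ω p) ^ (-(1/2) : ℝ))
    (h hq hp hqq hqp hpp : ℝ → ℝ → ℝ)
    (hhq : ∀ q p, HasDerivAt (fun q' => h q' p) (hq q p) q)
    (hhp : ∀ q p, HasDerivAt (h q) (hp q p) p)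
    (hhqq : ∀ q p, HasDerivAt (fun q' => hq q' p) (hqq q p) q)
    (hhqp : ∀ q p, HasDerivAt (fun p' => hq q p') (hqp q p) p)
    (hhpq : ∀ q p, HasDerivAt (fun q' => hp q' p) (hqp q p) q)
    (hhpp : ∀ q p, HasDerivAt (fun p' => hp q p') (hpp q p) p)
    (hcont : Continuous fun z : ℝ × ℝ =>
      (hq z.1 z.2, hp z.1 z.2, hqq z.1 z.2, hqp z.1 z.2, hpp z.1 z.2))
    (hppos : ∀ q p, 0 < hp q p)
    (hbot : ∀ q, h q 0 = 0)
    (heq : ∀ q, ∀ p ∈ Icc (0:ℝ) 1,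
      (1 + (hq q p) ^ 2) / (hp q p) ^ 2 * hpp q p
        - 2 * (hq q p / hp q p) * hqp q p + hqq q p - ω p * hp q p = 0)
    (Φ : ℝ → ℝ → ℝ)
    (hΦ : ∀ q p, Φ q p = ∫ p' in (0:ℝ)..p,
        ((hp q p' - Hp p') ^ 2 / (hp q p' * (Hp p') ^ 2) - (hq q p') ^ 2 / hp q p')) :
    ∀ q, ∀ p ∈ Icc (0:ℝ) 1,
      HasDerivAt (fun p' => Φ q p')
        ((hp q p - Hp p) ^ 2 / (hp q p * (Hp p) ^ 2) - (hq q p) ^ 2 / hp q p) p ∧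
      HasDerivAt (fun q' => Φ q' p)
        (-(hq q p) * ((1 + (hq q p) ^ 2) / (hp q p) ^ 2 - 1 / (Hp p) ^ 2)) q := by
  intro q p hpI
  obtain ⟨hp0, hp1⟩ := hpI
  -- basic continuity facts
  have cΩ : Continuous Ω := continuous_iff_continuousAt.2 fun x => (hΩ x).continuousAt
  have cA : Continuous (fun t => s ^ 2 - 2 * Ω t) :=
    continuous_const.sub (continuous_const.mul cΩ)
  set U : Set ℝ := (fun t => s ^ 2 - 2 * Ω t) ⁻¹' Ioi 0 with hUdef
  have hUopen : IsOpen U := isOpen_Ioi.preimage cA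
  have hApos : ∀ t ∈ U, 0 < s ^ 2 - 2 * Ω t := fun t ht => ht
  have hIccU : Icc (0:ℝ) 1 ⊆ U := fun t ht => hpos t ht
  have hpU : p ∈ U := hIccU ⟨hp0, hp1⟩
  have hHppos : ∀ t ∈ U, 0 < Hp t := fun t ht => by
    rw [hHp]; exact Real.rpow_pos_of_pos (hApos t ht) _
  have hH2 : ∀ t ∈ U, Hp t ^ 2 = (s ^ 2 - 2 * Ω t)⁻¹ := by
    intro t ht
    rw [hHp t, ← Real.rpow_natCast _ 2, ← Real.rpow_mul (hApos t ht).le]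
    norm_num
    exact Real.rpow_neg_one _
  have cHp : ContinuousOn Hp U := by
    have : ContinuousOn (fun t => (s ^ 2 - 2 * Ω t) ^ (-(1/2) : ℝ)) U :=
      ContinuousOn.rpow_const cA.continuousOn (fun t ht => Or.inl (hApos t ht).ne')
    rw [show Hp = fun t => (s ^ 2 - 2 * Ω t) ^ (-(1/2) : ℝ) from funext hHp]
    exact this
  have chq : Continuous fun z : ℝ × ℝ => hq z.1 z.2 := hcont.fst
  have chp : Continuous fun z : ℝ × ℝ => hp z.1 z.2 := hcont.snd.fst
  have chqq : Continuous fun z : ℝ × ℝ => hqq z.1 z.2 := hcont.snd.snd.fst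
  have chqp : Continuous fun z : ℝ × ℝ => hqp z.1 z.2 := hcont.snd.snd.snd.fst
  have chpp : Continuous fun z : ℝ × ℝ => hpp z.1 z.2 := hcont.snd.snd.snd.snd
  obtain ⟨F, hFdef⟩ : ∃ F : ℝ → ℝ → ℝ, F = fun x t =>
    (hp x t - Hp t) ^ 2 / (hp x t * Hp t ^ 2) - hq x t ^ 2 / hp x t := ⟨_, rfl⟩
  obtain ⟨Fq, hFqdef⟩ : ∃ Fq : ℝ → ℝ → ℝ, Fq = fun x t =>
    (2 * (hp x t - Hp t) * hqp x t * (hp x t * Hp t ^ 2)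
      - (hp x t - Hp t) ^ 2 * (hqp x t * Hp t ^ 2)) / (hp x t * Hp t ^ 2) ^ 2
      - (2 * hq x t * hqq x t * hp x t - hq x t ^ 2 * hqp x t) / hp x t ^ 2 := ⟨_, rfl⟩
  obtain ⟨G, hGdef⟩ : ∃ G : ℝ → ℝ → ℝ, G = fun x t =>
    -(hq x t) * ((1 + hq x t ^ 2) / hp x t ^ 2 - (s ^ 2 - 2 * Ω t)) := ⟨_, rfl⟩
  obtain ⟨Gp, hGpdef⟩ : ∃ Gp : ℝ → ℝ → ℝ, Gp = fun x t =>
    -(hqp x t) * ((1 + hq x t ^ 2) / hp x t ^ 2 - (s ^ 2 - 2 * Ω t))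
      + (-(hq x t)) * ((2 * hq x t * hqp x t * (hp x t ^ 2)
          - (1 + hq x t ^ 2) * (2 * hp x t * hpp x t)) / (hp x t ^ 2) ^ 2 + 2 * ω t) := ⟨_, rfl⟩
  have hΦF : ∀ x p', Φ x p' = ∫ t in (0:ℝ)..p', F x t := by
    intro x p'; rw [hΦ, hFdef]
  have cHpz : ContinuousOn (fun z : ℝ × ℝ => Hp z.2) (univ ×ˢ U) :=
    cHp.comp continuous_snd.continuousOn (fun z hz => hz.2)
  have cF2 : ContinuousOn (fun z : ℝ × ℝ => F z.1 z.2) (univ ×ˢ U) := by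
    rw [hFdef]
    exact (((chp.continuousOn.sub cHpz).pow 2).div
        (chp.continuousOn.mul (cHpz.pow 2))
        (fun z hz => mul_ne_zero (hppos z.1 z.2).ne'
          (pow_ne_zero 2 (hHppos z.2 hz.2).ne'))).sub
      ((chq.continuousOn.pow 2).div chp.continuousOn (fun z hz => (hppos z.1 z.2).ne'))
  have cFq2 : ContinuousOn (fun z : ℝ × ℝ => Fq z.1 z.2) (univ ×ˢ U) := by
    rw [hFqdef]
    have hden : ∀ z : ℝ × ℝ, z ∈ univ ×ˢ U → hp z.1 z.2 * Hp z.2 ^ 2 ≠ 0 :=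
      fun z hz => mul_ne_zero (hppos z.1 z.2).ne' (pow_ne_zero 2 (hHppos z.2 hz.2).ne')
    have c1 : ContinuousOn (fun z : ℝ × ℝ =>
        (2 * (hp z.1 z.2 - Hp z.2) * hqp z.1 z.2 * (hp z.1 z.2 * Hp z.2 ^ 2)
          - (hp z.1 z.2 - Hp z.2) ^ 2 * (hqp z.1 z.2 * Hp z.2 ^ 2))
          / (hp z.1 z.2 * Hp z.2 ^ 2) ^ 2) (univ ×ˢ U) :=
      ((((continuous_const.continuousOn.mul (chp.continuousOn.sub cHpz)).mul
        chqp.continuousOn).mul (chp.continuousOn.mul (cHpz.pow 2))).sub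
        (((chp.continuousOn.sub cHpz).pow 2).mul
          (chqp.continuousOn.mul (cHpz.pow 2)))).div
        ((chp.continuousOn.mul (cHpz.pow 2)).pow 2)
        (fun z hz => pow_ne_zero 2 (hden z hz))
    have c2 : ContinuousOn (fun z : ℝ × ℝ =>
        (2 * hq z.1 z.2 * hqq z.1 z.2 * hp z.1 z.2 - hq z.1 z.2 ^ 2 * hqp z.1 z.2)
          / hp z.1 z.2 ^ 2) (univ ×ˢ U) :=
      ((((continuous_const.continuousOn.mul chq.continuousOn).mul chqq.continuousOn).mul
          chp.continuousOn).sub ((chq.continuousOn.pow 2).mul chqp.continuousOn)).div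
        (chp.continuousOn.pow 2)
        (fun z hz => pow_ne_zero 2 (hppos z.1 z.2).ne')
    exact c1.sub c2
  have contF1 : ∀ x, ContinuousOn (F x) U := by
    intro x
    have cmk : Continuous (fun t : ℝ => (x, t)) := continuous_const.prodMk continuous_id
    exact cF2.comp cmk.continuousOn (fun t ht => ⟨mem_univ _, ht⟩)
  have contFq1 : ∀ x, ContinuousOn (Fq x) U := by
    intro x
    have cmk : Continuous (fun t : ℝ => (x, t)) := continuous_const.prodMk continuous_id
    exact cFq2.comp cmk.continuousOn (fun t ht => ⟨mem_univ _, ht⟩)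
  have hIccsub : uIcc (0:ℝ) p ⊆ Icc 0 1 := by
    rw [uIcc_of_le hp0]; exact Icc_subset_Icc le_rfl hp1
  have hIocsub : Ι (0:ℝ) p ⊆ Icc 0 1 := by
    rw [uIoc_of_le hp0]
    exact Ioc_subset_Icc_self.trans (Icc_subset_Icc le_rfl hp1)
  constructor
  · -- derivative in p
    have hint : IntervalIntegrable (F q) volume 0 p :=
      ((contF1 q).mono (hIccsub.trans hIccU)).intervalIntegrable
    have hmeas : StronglyMeasurableAtFilter (F q) (𝓝 p) :=
      ContinuousOn.stronglyMeasurableAtFilter hUopen (contF1 q) p hpU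
    have cAt : ContinuousAt (F q) p := (contF1 q).continuousAt (hUopen.mem_nhds hpU)
    have hfun : (fun p' => Φ q p') = fun p' => ∫ t in (0:ℝ)..p', F q t :=
      funext fun p' => hΦF q p'
    have hFval : F q p
        = (hp q p - Hp p) ^ 2 / (hp q p * Hp p ^ 2) - hq q p ^ 2 / hp q p := by
      rw [hFdef]
    rw [hfun, ← hFval]
    exact intervalIntegral.integral_hasDerivAt_right hint hmeas cAt
  · -- derivative in q
    have hdF : ∀ x, ∀ t ∈ Icc (0:ℝ) 1, HasDerivAt (fun x' => F x' t) (Fq x t) x := by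
      intro x t ht
      have hHne : Hp t ≠ 0 := (hHppos t (hIccU ht)).ne'
      have hb : hp x t ≠ 0 := (hppos x t).ne'
      have d1 : HasDerivAt (fun x' => hp x' t) (hqp x t) x := hhpq x t
      have d2 : HasDerivAt (fun x' => hq x' t) (hqq x t) x := hhqq x t
      have num := (d1.sub_const (Hp t)).pow 2
      have den := d1.mul_const (Hp t ^ 2)
      have dd1 := num.div den (mul_ne_zero hb (pow_ne_zero 2 hHne))
      have dd2 := (d2.pow 2).div d1 hb
      have hD := dd1.sub dd2
      rw [hFdef, hFqdef]
      refine hD.congr_deriv ?_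
      simp only [Pi.pow_apply]
      push_cast
      ring
    have hdG : ∀ x t, HasDerivAt (fun t' => G x t') (Gp x t) t := by
      intro x t
      have d1 : HasDerivAt (fun t' => hq x t') (hqp x t) t := hhqp x t
      have d2 : HasDerivAt (fun t' => hp x t') (hpp x t) t := hhpp x t
      have dA : HasDerivAt (fun t' => s ^ 2 - 2 * Ω t') (-(2 * ω t)) t := by
        simpa using ((hΩ t).const_mul 2).const_sub (s ^ 2)
      have dn : HasDerivAt (fun t' => (1:ℝ) + hq x t' ^ 2) (2 * hq x t * hqp x t) t := by
        have := (d1.pow 2).const_add (1:ℝ)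
        refine this.congr_deriv ?_
        push_cast; ring
      have dd : HasDerivAt (fun t' => hp x t' ^ 2) (2 * hp x t * hpp x t) t := by
        have := d2.pow 2
        refine this.congr_deriv ?_
        push_cast; ring
      have dfrac := dn.div dd (pow_ne_zero 2 (hppos x t).ne')
      have dinner := dfrac.sub dA
      have hD := d1.neg.mul dinner
      rw [hGdef, hGpdef]
      refine hD.congr_deriv ?_
      simp only [Pi.sub_apply, Pi.div_apply, Pi.neg_apply]
      ring
    have hFqGp : ∀ x, ∀ t ∈ Icc (0:ℝ) 1, Fq x t = Gp x t := by
      intro x t ht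
      have hb : hp x t ≠ 0 := (hppos x t).ne'
      have htU : t ∈ U := hIccU ht
      have hHne : Hp t ≠ 0 := (hHppos t htU).ne'
      have hc : hqq x t = ω t * hp x t + 2 * (hq x t / hp x t) * hqp x t
          - (1 + hq x t ^ 2) / hp x t ^ 2 * hpp x t := by
        have := heq x t ht; linarith
      have e1 : Fq x t = hqp x t / Hp t ^ 2 - hqp x t / hp x t ^ 2
          - (2 * hq x t * hqq x t * hp x t - hq x t ^ 2 * hqp x t) / hp x t ^ 2 := by
        rw [hFqdef]
        field_simp
        ring
      rw [e1, hH2 t htU, div_inv_eq_mul, hc, hGpdef]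
      field_simp
      ring
    have hq0 : ∀ x, hq x 0 = 0 := by
      intro x
      have h1 := hhq x 0
      have h2 : (fun q' => h q' 0) = fun _ => (0:ℝ) := funext fun q' => hbot q'
      rw [h2] at h1
      exact h1.unique (hasDerivAt_const x 0)
    have hG0 : ∀ x, G x 0 = 0 := by
      intro x; rw [hGdef]; simp only [hq0 x, neg_zero, zero_mul]
    have hGFTC : ∀ x, (∫ t in (0:ℝ)..p, Fq x t) = G x p := by
      intro x
      have hint : IntervalIntegrable (Fq x) volume 0 p :=
        ((contFq1 x).mono (hIccsub.trans hIccU)).intervalIntegrable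
      have := intervalIntegral.integral_eq_sub_of_hasDerivAt (f := G x) (f' := Fq x)
        (fun t ht => by rw [hFqGp x t (hIccsub ht)]; exact hdG x t) hint
      rw [this, hG0 x, sub_zero]
    -- dominated differentiation under the integral sign
    have hsubU : Ι (0:ℝ) p ⊆ U := hIocsub.trans hIccU
    have hF_meas : ∀ᶠ x in 𝓝 q, AEStronglyMeasurable (F x) (volume.restrict (Ι (0:ℝ) p)) :=
      Filter.Eventually.of_forall fun x =>
        ((contF1 x).mono hsubU).aestronglyMeasurable measurableSet_uIoc
    have hF_int : IntervalIntegrable (F q) volume 0 p :=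
      ((contF1 q).mono (hIccsub.trans hIccU)).intervalIntegrable
    have hF'_meas : AEStronglyMeasurable (Fq q) (volume.restrict (Ι (0:ℝ) p)) :=
      ((contFq1 q).mono hsubU).aestronglyMeasurable measurableSet_uIoc
    obtain ⟨C, hC⟩ := ((isCompact_closedBall q 1).prod isCompact_Icc).exists_bound_of_continuousOn
      (cFq2.mono (prod_mono (subset_univ _) hIccU))
    have h_bound : ∀ᵐ t ∂volume, t ∈ Ι (0:ℝ) p → ∀ x ∈ Metric.ball q 1, ‖Fq x t‖ ≤ C :=
      Filter.Eventually.of_forall fun t ht x hx =>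
        hC (x, t) ⟨Metric.ball_subset_closedBall hx, hIocsub ht⟩
    have bound_int : IntervalIntegrable (fun _ : ℝ => C) volume 0 p :=
      intervalIntegrable_const
    have h_diff : ∀ᵐ t ∂volume, t ∈ Ι (0:ℝ) p → ∀ x ∈ Metric.ball q 1,
        HasDerivAt (fun x' => F x' t) (Fq x t) x :=
      Filter.Eventually.of_forall fun t ht x _ => hdF x t (hIocsub ht)
    have main := intervalIntegral.hasDerivAt_integral_of_dominated_loc_of_deriv_le
      (Metric.ball_mem_nhds q zero_lt_one) hF_meas hF_int hF'_meas h_bound bound_int h_diff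
    have heqfun : (fun x => Φ x p) = fun x => ∫ t in (0:ℝ)..p, F x t :=
      funext fun x => hΦF x p
    have hval : (∫ t in (0:ℝ)..p, Fq q t)
        = -(hq q p) * ((1 + hq q p ^ 2) / hp q p ^ 2 - 1 / Hp p ^ 2) := by
      rw [hGFTC q, hGdef, hH2 p hpU, one_div, inv_inv]
    rw [heqfun, ← hval]
    exact main.2
end

section
/- With Φ, w, h, H as above and F the flow force constant of h, the boundary value of Φ on the surface satisfies Φ(q,1) = 2(F - σ(s;r)) - 2(r - R(s)) w(q,1) + (w(q,1))² for all q ∈ ℝ, and Φ(q,0) = 0. -/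
open Real MeasureTheory Set Filter Topology

lemma alg_key (a A u hh HH Ωp Ω1 r s H1 Rs : ℝ) (ha : a ≠ 0) (hA : A ≠ 0)
    (hA2 : A ^ 2 * (s ^ 2 - 2 * Ωp) = 1) (hRs : Rs = s ^ 2 / 2 - Ω1 + H1) :
    (a - A) ^ 2 / (a * A ^ 2) - u ^ 2 / a
      = 2 * (((1 - u ^ 2) / (2 * a ^ 2) - hh - Ωp + Ω1 + r) * a)
        - 2 * ((1 / (2 * A ^ 2) - HH - Ωp + Ω1 + r) * A)
        - (2 * (r - Rs) * (a - A) - 2 * (A * (hh - HH) + (HH - H1) * (a - A))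
            - 2 * (hh - HH) * (a - A)) := by
  subst hRs
  have hs : s ^ 2 = 1 / A ^ 2 + 2 * Ωp := by
    field_simp at hA2 ⊢
    linarith
  rw [hs]
  field_simp
  ring

theorem stmt16 (ω Ω : ℝ → ℝ) (hωc : Continuous ω) (hΩ : ∀ p, HasDerivAt Ω (ω p) p)
    (hΩ0 : Ω 0 = 0)
    (r s : ℝ) (hpos : ∀ p ∈ Icc (0:ℝ) 1, 0 < s ^ 2 - 2 * Ω p)
    (Hp H : ℝ → ℝ) (hHp : ∀ p, Hp p = (s ^ 2 - 2 * Ω p) ^ (-(1/2) : ℝ))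
    (hH : ∀ p, H p = ∫ τ in (0:ℝ)..p, Hp τ)
    (Rs : ℝ) (hRs : Rs = s ^ 2 / 2 - Ω 1 + H 1)
    (h hq hp hqq hqp hpp : ℝ → ℝ → ℝ)
    (hhq : ∀ q p, HasDerivAt (fun q' => h q' p) (hq q p) q)
    (hhp : ∀ q p, HasDerivAt (h q) (hp q p) p)
    (hhqq : ∀ q p, HasDerivAt (fun q' => hq q' p) (hqq q p) q)
    (hhqp : ∀ q p, HasDerivAt (fun p' => hq q p') (hqp q p) p)
    (hhpq : ∀ q p, HasDerivAt (fun q' => hp q' p) (hqp q p) q)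
    (hhpp : ∀ q p, HasDerivAt (fun p' => hp q p') (hpp q p) p)
    (hcont : Continuous fun z : ℝ × ℝ =>
      (hq z.1 z.2, hp z.1 z.2, hqq z.1 z.2, hqp z.1 z.2, hpp z.1 z.2))
    (hppos : ∀ q p, 0 < hp q p)
    (hbot : ∀ q, h q 0 = 0)
    (heq : ∀ q, ∀ p ∈ Icc (0:ℝ) 1,
      (1 + (hq q p) ^ 2) / (hp q p) ^ 2 * hpp q p
        - 2 * (hq q p / hp q p) * hqp q p + hqq q p - ω p * hp q p = 0)
    (htopbc : ∀ q, (1 + (hq q 1) ^ 2) / (2 * (hp q 1) ^ 2) + h q 1 = r)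
    (F : ℝ) (hF : ∀ q, F = ∫ p in (0:ℝ)..1,
        ((1 - (hq q p) ^ 2) / (2 * (hp q p) ^ 2) - h q p - Ω p + Ω 1 + r) * hp q p)
    (σ : ℝ) (hσ : σ = ∫ p in (0:ℝ)..1,
        (1 / (2 * (Hp p) ^ 2) - H p - Ω p + Ω 1 + r) * Hp p)
    (Φ : ℝ → ℝ → ℝ)
    (hΦ : ∀ q p, Φ q p = ∫ p' in (0:ℝ)..p,
        ((hp q p' - Hp p') ^ 2 / (hp q p' * (Hp p') ^ 2) - (hq q p') ^ 2 / hp q p')) :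
    ∀ q, Φ q 1 = 2 * (F - σ) - 2 * (r - Rs) * (h q 1 - H 1) + (h q 1 - H 1) ^ 2 ∧
      Φ q 0 = 0 := by
  intro q
  have hIcc : uIcc (0:ℝ) 1 = Icc 0 1 := uIcc_of_le zero_le_one
  have contΩ : Continuous Ω := by
    refine continuous_iff_continuousAt.mpr fun p => (hΩ p).continuousAt
  have hHpfun : Hp = fun t => (s ^ 2 - 2 * Ω t) ^ (-(1/2) : ℝ) := funext hHp
  have contBase : Continuous fun t => s ^ 2 - 2 * Ω t :=
    continuous_const.sub (continuous_const.mul contΩ)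
  have hUopen : IsOpen {t : ℝ | 0 < s ^ 2 - 2 * Ω t} := isOpen_lt continuous_const contBase
  have cHpAt : ∀ p : ℝ, 0 < s ^ 2 - 2 * Ω p → ContinuousAt Hp p := by
    intro p hpm
    rw [hHpfun]
    exact contBase.continuousAt.rpow_const (Or.inl hpm.ne')
  have c_Hp : ContinuousOn Hp (Icc 0 1) := fun p hpm =>
    (cHpAt p (hpos p hpm)).continuousWithinAt
  have HpPos : ∀ p ∈ Icc (0:ℝ) 1, 0 < Hp p := by
    intro p hpm
    rw [hHp]
    exact Real.rpow_pos_of_pos (hpos p hpm) _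
  have hH' : ∀ p ∈ Icc (0:ℝ) 1, HasDerivAt H (Hp p) p := by
    intro p hpm
    have hint : IntervalIntegrable Hp volume 0 p := by
      apply (c_Hp.mono ?_).intervalIntegrable
      rw [uIcc_of_le hpm.1]
      exact Icc_subset_Icc le_rfl hpm.2
    have hmeas : StronglyMeasurableAtFilter Hp (𝓝 p) volume :=
      ContinuousAt.stronglyMeasurableAtFilter hUopen (fun x hx => cHpAt x hx) p (hpos p hpm)
    have := intervalIntegral.integral_hasDerivAt_right hint hmeas (cHpAt p (hpos p hpm))
    have hHfun : H = fun u => ∫ t in (0:ℝ)..u, Hp t := funext hH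
    rw [hHfun]
    exact this
  have c_hp : Continuous fun p => hp q p :=
    continuous_iff_continuousAt.mpr fun p => (hhpp q p).continuousAt
  have c_hq : Continuous fun p => hq q p :=
    continuous_iff_continuousAt.mpr fun p => (hhqp q p).continuousAt
  have c_h : Continuous (h q) :=
    continuous_iff_continuousAt.mpr fun p => (hhp q p).continuousAt
  have c_H : ContinuousOn H (Icc 0 1) := fun p hpm =>
    ((hH' p hpm).continuousAt).continuousWithinAt
  set fI : ℝ → ℝ := fun p =>
    ((1 - (hq q p) ^ 2) / (2 * (hp q p) ^ 2) - h q p - Ω p + Ω 1 + r) * hp q p with hfI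
  set gI : ℝ → ℝ := fun p =>
    (1 / (2 * (Hp p) ^ 2) - H p - Ω p + Ω 1 + r) * Hp p with hgI
  set II : ℝ → ℝ := fun p =>
    (hp q p - Hp p) ^ 2 / (hp q p * (Hp p) ^ 2) - (hq q p) ^ 2 / hp q p with hII
  set ψ : ℝ → ℝ := fun p => 2 * (r - Rs) * (h q p - H p)
    - 2 * (H p - H 1) * (h q p - H p) - (h q p - H p) ^ 2 with hψdef
  set ψ' : ℝ → ℝ := fun p => 2 * (r - Rs) * (hp q p - Hp p)
    - 2 * (Hp p * (h q p - H p) + (H p - H 1) * (hp q p - Hp p))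
    - 2 * (h q p - H p) * (hp q p - Hp p) with hψ'def
  have hψ : ∀ p ∈ Icc (0:ℝ) 1, HasDerivAt ψ (ψ' p) p := by
    intro p hpm
    have hw : HasDerivAt (fun t => h q t - H t) (hp q p - Hp p) p :=
      (hhp q p).sub (hH' p hpm)
    have hHH : HasDerivAt (fun t => H t - H 1) (Hp p) p :=
      (hH' p hpm).sub_const _
    have h2 : HasDerivAt (fun t => 2 * (r - Rs) * (h q t - H t) - 2 * (H t - H 1) * (h q t - H t)
        - (h q t - H t) ^ 2) (2 * (r - Rs) * (hp q p - Hp p) - (2 * Hp p * (h q p - H p)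
        + 2 * (H p - H 1) * (hp q p - Hp p)) - ((2:ℕ):ℝ) * (h q p - H p) ^ (2 - 1) * (hp q p - Hp p)) p :=
      ((hw.const_mul (2 * (r - Rs))).sub ((hHH.const_mul 2).mul hw)).sub (hw.pow 2)
    convert h2 using 1
    norm_num
    ring
  have halg : ∀ p ∈ Icc (0:ℝ) 1, II p = 2 * fI p - 2 * gI p - ψ' p := by
    intro p hpm
    have hx : 0 < s ^ 2 - 2 * Ω p := hpos p hpm
    have hA2 : (Hp p) ^ 2 * (s ^ 2 - 2 * Ω p) = 1 := by
      rw [hHp]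
      rw [← Real.rpow_natCast ((s ^ 2 - 2 * Ω p) ^ (-(1/2) : ℝ)) 2,
        ← Real.rpow_mul hx.le]
      norm_num
      rw [Real.rpow_neg_one]
      exact inv_mul_cancel₀ hx.ne'
    exact alg_key (hp q p) (Hp p) (hq q p) (h q p) (H p) (Ω p) (Ω 1) r s (H 1) Rs
      (hppos q p).ne' (HpPos p hpm).ne' hA2 hRs
  -- integrability
  have c_fI : ContinuousOn fI (Icc 0 1) := by
    apply ContinuousOn.mul _ c_hp.continuousOn
    apply ContinuousOn.add
    apply ContinuousOn.add
    apply ContinuousOn.sub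
    apply ContinuousOn.sub
    · exact ContinuousOn.div (by fun_prop) (by fun_prop)
        (fun p _ => by have := hppos q p; positivity)
    · exact c_h.continuousOn
    · exact contΩ.continuousOn
    · exact continuousOn_const
    · exact continuousOn_const
  have c_gI : ContinuousOn gI (Icc 0 1) := by
    apply ContinuousOn.mul _ c_Hp
    apply ContinuousOn.add
    apply ContinuousOn.add
    apply ContinuousOn.sub
    apply ContinuousOn.sub
    · exact ContinuousOn.div continuousOn_const
        (continuousOn_const.mul (c_Hp.pow 2))
        (fun p hpm => by have := HpPos p hpm; positivity)
    · exact c_H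
    · exact contΩ.continuousOn
    · exact continuousOn_const
    · exact continuousOn_const
  have c_ψ' : ContinuousOn ψ' (Icc 0 1) := by
    apply ContinuousOn.sub
    apply ContinuousOn.sub
    · exact continuousOn_const.mul (c_hp.continuousOn.sub c_Hp)
    · exact continuousOn_const.mul ((c_Hp.mul (c_h.continuousOn.sub c_H)).add
        ((c_H.sub continuousOn_const).mul (c_hp.continuousOn.sub c_Hp)))
    · exact (continuousOn_const.mul (c_h.continuousOn.sub c_H)).mul
        (c_hp.continuousOn.sub c_Hp)
  have intfI : IntervalIntegrable fI volume 0 1 := by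
    apply ContinuousOn.intervalIntegrable; rwa [hIcc]
  have intgI : IntervalIntegrable gI volume 0 1 := by
    apply ContinuousOn.intervalIntegrable; rwa [hIcc]
  have intψ' : IntervalIntegrable ψ' volume 0 1 := by
    apply ContinuousOn.intervalIntegrable; rwa [hIcc]
  have key : (∫ p in (0:ℝ)..1, II p)
      = ∫ p in (0:ℝ)..1, (2 * fI p - 2 * gI p - ψ' p) := by
    apply intervalIntegral.integral_congr
    rw [hIcc]
    exact fun p hpm => halg p hpm
  have split : (∫ p in (0:ℝ)..1, (2 * fI p - 2 * gI p - ψ' p))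
      = 2 * (∫ p in (0:ℝ)..1, fI p) - 2 * (∫ p in (0:ℝ)..1, gI p)
        - ∫ p in (0:ℝ)..1, ψ' p := by
    rw [intervalIntegral.integral_sub (((intfI.const_mul 2).sub (intgI.const_mul 2))) intψ',
      intervalIntegral.integral_sub (intfI.const_mul 2) (intgI.const_mul 2),
      intervalIntegral.integral_const_mul, intervalIntegral.integral_const_mul]
  have ftc : (∫ p in (0:ℝ)..1, ψ' p) = ψ 1 - ψ 0 := by
    apply intervalIntegral.integral_eq_sub_of_hasDerivAt
    · intro p hpm
      exact hψ p (hIcc ▸ hpm)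
    · exact intψ'
  have hH0 : H 0 = 0 := by rw [hH]; simp
  have hψ0 : ψ 0 = 0 := by simp [hψdef, hbot q, hH0]
  have hψ1 : ψ 1 = 2 * (r - Rs) * (h q 1 - H 1) - (h q 1 - H 1) ^ 2 := by
    simp [hψdef]
  constructor
  · have hΦ1 : Φ q 1 = ∫ p in (0:ℝ)..1, II p := hΦ q 1
    rw [hΦ1, key, split, ftc, hψ0, hψ1, ← hF q, ← hσ]
    ring
  · rw [hΦ q 0]
    simp
end
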